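/- arXiv:1312.7132 — 6 statements merged into one kernel-verified Lean document; each statement's English description precedes it below -/
import Mathlib

section
/- Let S, Y be independent random variables where S ≥ 0 has distribution with right endpoint equal to 1, and Y > 0 has a rapidly varying tail (P(Y > λu)/P(Y > u) → 0 for every λ > 1). Then for any w ∈ (0,1), P(SY > u) ∼ P(SY > u, S > w) as u → ∞. -/
open MeasureTheory ProbabilityTheory Filter Topology Real

theorem random_contraction_truncation
    {Ω : Type*} [MeasureSpace Ω] [IsProbabilityMeasure (ℙ : Measure Ω)]
    (S Y : Ω → ℝ) (hS : Measurable S) (hY : Measurable Y)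
    (hindep : IndepFun S Y)
    (hS0 : ∀ᵐ ω ∂ℙ, 0 ≤ S ω) (hS1 : ∀ᵐ ω ∂ℙ, S ω ≤ 1)
    (hSend : ∀ w : ℝ, w < 1 → 0 < ℙ {ω | S ω > w})
    (hYpos : ∀ᵐ ω ∂ℙ, 0 < Y ω)
    (hYend : ∀ u : ℝ, 0 < ℙ {ω | Y ω > u})
    (hrap : ∀ l : ℝ, 1 < l →
      Tendsto (fun u => (ℙ {ω | Y ω > l * u}).toReal / (ℙ {ω | Y ω > u}).toReal)
        atTop (𝓝 0)) :
    ∀ w : ℝ, 0 < w → w < 1 →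
      Tendsto (fun u =>
          (ℙ {ω | S ω * Y ω > u ∧ S ω > w}).toReal / (ℙ {ω | S ω * Y ω > u}).toReal)
        atTop (𝓝 1) := by
  intro w hw0 hw1
  set w' : ℝ := (1 + w) / 2 with hw'def
  have hww' : w < w' := by rw [hw'def]; linarith
  have hw'1 : w' < 1 := by rw [hw'def]; linarith
  have hw'0 : 0 < w' := lt_trans hw0 hww'
  have hmSY : Measurable fun ω => S ω * Y ω := hS.mul hY
  set g : ℝ → ENNReal := fun u => ℙ {ω | S ω * Y ω > u} with hg
  set f : ℝ → ENNReal := fun u => ℙ {ω | S ω * Y ω > u ∧ S ω > w} with hf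
  set h : ℝ → ENNReal := fun u => ℙ {ω | S ω * Y ω > u ∧ S ω ≤ w} with hh
  -- measurable sets
  have hmg : ∀ u : ℝ, MeasurableSet {ω | S ω * Y ω > u} := fun u =>
    hmSY measurableSet_Ioi
  have hmf : ∀ u : ℝ, MeasurableSet {ω | S ω * Y ω > u ∧ S ω > w} := fun u =>
    (hmg u).inter (hS measurableSet_Ioi)
  have hmh : ∀ u : ℝ, MeasurableSet {ω | S ω * Y ω > u ∧ S ω ≤ w} := fun u =>
    (hmg u).inter (hS measurableSet_Iic)
  -- g = f + h
  have hsplit : ∀ u : ℝ, g u = f u + h u := by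
    intro u
    simp only [hg, hf, hh]
    have : {ω | S ω * Y ω > u} =
        {ω | S ω * Y ω > u ∧ S ω > w} ∪ {ω | S ω * Y ω > u ∧ S ω ≤ w} := by
      ext ω; simp only [Set.mem_setOf_eq, Set.mem_union]
      constructor
      · intro h1
        rcases le_or_gt (S ω) w with h2 | h2
        · exact Or.inr ⟨h1, h2⟩
        · exact Or.inl ⟨h1, h2⟩
      · rintro (⟨h1, _⟩ | ⟨h1, _⟩) <;> exact h1
    rw [this, measure_union _ (hmh u)]
    rw [Set.disjoint_left]
    rintro ω ⟨_, h1⟩ ⟨_, h2⟩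
    exact absurd h2 (not_le.mpr h1)
  -- lower bound on g
  have hgl : ∀ u : ℝ, 0 < u →
      ℙ {ω | S ω > w'} * ℙ {ω | Y ω > u / w'} ≤ g u := by
    intro u hu
    have hind : ℙ (S ⁻¹' Set.Ioi w' ∩ Y ⁻¹' Set.Ioi (u / w')) =
        ℙ (S ⁻¹' Set.Ioi w') * ℙ (Y ⁻¹' Set.Ioi (u / w')) :=
      hindep.measure_inter_preimage_eq_mul _ _ measurableSet_Ioi measurableSet_Ioi
    have heq1 : S ⁻¹' Set.Ioi w' = {ω | S ω > w'} := rfl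
    have heq2 : Y ⁻¹' Set.Ioi (u / w') = {ω | Y ω > u / w'} := rfl
    rw [heq1, heq2] at hind
    rw [← hind]
    apply measure_mono
    rintro ω ⟨h1, h2⟩
    have h1' : w' < S ω := h1
    have h2' : u / w' < Y ω := h2
    show u < S ω * Y ω
    have hY0 : 0 < Y ω := lt_of_le_of_lt (by positivity) h2'
    calc u = w' * (u / w') := by field_simp
    _ < w' * Y ω := by exact mul_lt_mul_of_pos_left h2' hw'0
    _ < S ω * Y ω := by exact mul_lt_mul_of_pos_right h1' hY0
  -- upper bound on h
  have hhu : ∀ u : ℝ, 0 < u → h u ≤ ℙ {ω | Y ω > u / w} := by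
    intro u hu
    rw [hh]
    apply measure_mono_ae
    filter_upwards [hS0] with ω hSω
    rintro ⟨h1, h2⟩
    show u / w < Y ω
    have hY0 : 0 < Y ω := by
      by_contra hc
      push_neg at hc
      have : S ω * Y ω ≤ 0 := mul_nonpos_of_nonneg_of_nonpos hSω hc
      linarith
    have : S ω * Y ω ≤ w * Y ω := mul_le_mul_of_nonneg_right h2 hY0.le
    rw [div_lt_iff₀ hw0]
    nlinarith
  -- positivity and finiteness
  have hgne : ∀ u : ℝ, g u ≠ ⊤ := fun u => measure_ne_top _ _
  have hfne : ∀ u : ℝ, f u ≠ ⊤ := fun u => measure_ne_top _ _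
  have hhne : ∀ u : ℝ, h u ≠ ⊤ := fun u => measure_ne_top _ _
  have hgpos : ∀ u : ℝ, 0 < u → 0 < (g u).toReal := by
    intro u hu
    refine ENNReal.toReal_pos ?_ (hgne u)
    have := lt_of_lt_of_le (ENNReal.mul_pos (hSend w' hw'1).ne' (hYend (u / w')).ne')
      (hgl u hu)
    exact this.ne'
  -- the ratio h/g tends to 0
  set c : ℝ := (ℙ {ω | S ω > w'}).toReal with hc
  have hcpos : 0 < c := ENNReal.toReal_pos (hSend w' hw'1).ne' (measure_ne_top _ _)
  set B : ℝ → ℝ := fun u =>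
    (ℙ {ω | Y ω > u / w}).toReal / (c * (ℙ {ω | Y ω > u / w'}).toReal) with hB
  have hBtend : Tendsto B atTop (𝓝 0) := by
    have hl : 1 < w' / w := (one_lt_div hw0).mpr hww'
    have hcomp : Tendsto (fun u : ℝ => u / w') atTop atTop :=
      tendsto_id.atTop_div_const hw'0
    have := (hrap (w' / w) hl).comp hcomp
    have heq : B = fun u => c⁻¹ *
        ((ℙ {ω | Y ω > (w' / w) * (u / w')}).toReal / (ℙ {ω | Y ω > u / w'}).toReal) := by
      funext u
      rw [hB]
      have : w' / w * (u / w') = u / w := by field_simp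
      rw [this]
      field_simp
    rw [heq]
    have := this.const_mul c⁻¹
    simpa using this
  have hratio : Tendsto (fun u => (h u).toReal / (g u).toReal) atTop (𝓝 0) := by
    apply squeeze_zero' (t₀ := atTop) (g := B)
    · filter_upwards with u
      positivity
    · filter_upwards [eventually_gt_atTop 0] with u hu
      simp only [hB]
      apply div_le_div₀ (by positivity)
      · exact ENNReal.toReal_mono (measure_ne_top _ _) (hhu u hu)
      · exact mul_pos hcpos
          (ENNReal.toReal_pos (hYend (u / w')).ne' (measure_ne_top _ _))
      · rw [← ENNReal.toReal_mul]
        exact ENNReal.toReal_mono (hgne u) (hgl u hu)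
    · exact hBtend
  -- conclude
  have hfinal : ∀ᶠ u in atTop, (f u).toReal / (g u).toReal =
      1 - (h u).toReal / (g u).toReal := by
    filter_upwards [eventually_gt_atTop 0] with u hu
    have hgp := hgpos u hu
    have hsum : (g u).toReal = (f u).toReal + (h u).toReal := by
      rw [hsplit u, ENNReal.toReal_add (hfne u) (hhne u)]
    field_simp
    linarith
  have : Tendsto (fun u => 1 - (h u).toReal / (g u).toReal) atTop (𝓝 1) := by
    have := hratio.const_sub 1
    simpa using this
  exact Tendsto.congr' (Filter.EventuallyEq.symm hfinal) this
end

section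
/- Let S, Y, Y* be independent random variables, S ≥ 0 with distribution whose right endpoint is 1, Y with rapidly varying tail, and suppose P(Y > u) ∼ L(u) P(Y* > u) as u → ∞ for some slowly varying function L. Then P(SY > u) ∼ L(u) P(SY* > u) as u → ∞. -/
open MeasureTheory ProbabilityTheory Filter Topology Real

/-- `g` is regularly varying at infinity with index `ρ`. -/
def RegularlyVarying (g : ℝ → ℝ) (ρ : ℝ) : Prop :=
  ∀ x : ℝ, 0 < x → Filter.Tendsto (fun u => g (u * x) / g u) Filter.atTop (nhds (x ^ ρ))

lemma uct_aux (k : ℝ → ℝ) (hk : Measurable k) (hkpos : ∀ t, 0 < k t)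
    (hsv : ∀ s : ℝ, Tendsto (fun t => k (t + s) / k t) atTop (𝓝 1))
    (Slen ε : ℝ) (hSlen : 0 < Slen) (hε : 0 < ε) (hε2 : ε ≤ 1/2) :
    ∀ᶠ t in atTop, ∀ s ∈ Set.Icc 0 Slen, |k (t + s) / k t - 1| ≤ 4 * ε := by
  by_contra hcon
  rw [Filter.not_eventually] at hcon
  have hex : ∀ n : ℕ, ∃ t : ℝ, (n : ℝ) ≤ t ∧ ∃ s, s ∈ Set.Icc 0 Slen ∧
      4 * ε < |k (t + s) / k t - 1| := by
    intro n
    obtain ⟨t, ht, hbad⟩ := Filter.frequently_atTop.mp hcon (n : ℝ)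
    push_neg at hbad
    obtain ⟨s, hs, hbad⟩ := hbad
    exact ⟨t, ht, s, hs, hbad⟩
  choose t ht s hsmem hbad using hex
  have htend : Tendsto t atTop atTop :=
    tendsto_atTop_mono ht tendsto_natCast_atTop_atTop
  have htend2 : Tendsto (fun n => t n + s n) atTop atTop :=
    tendsto_atTop_mono (fun n => le_add_of_nonneg_right (hsmem n).1) htend
  set A : ℕ → Set ℝ := fun m => {x | |k (t m + x) / k (t m) - 1| ≤ ε} with hA_def
  set B : ℕ → Set ℝ := fun m => {x | |k (t m + s m + x) / k (t m + s m) - 1| ≤ ε} with hB_def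
  have hAmeas : ∀ m, MeasurableSet (A m) := by
    intro m
    have : Measurable fun x => |k (t m + x) / k (t m) - 1| := by
      apply Measurable.abs
      exact ((hk.comp (measurable_const.add measurable_id)).div_const _).sub measurable_const
    exact this measurableSet_Iic
  have hBmeas : ∀ m, MeasurableSet (B m) := by
    intro m
    have : Measurable fun x => |k (t m + s m + x) / k (t m + s m) - 1| := by
      apply Measurable.abs
      exact ((hk.comp (measurable_const.add measurable_id)).div_const _).sub measurable_const
    exact this measurableSet_Iic
  set V : ℕ → Set ℝ := fun n => Set.Icc (0:ℝ) (2*Slen) ∩ ⋂ m ∈ Set.Ici n, (A m ∩ B m) with hV_def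
  have hVmeas : ∀ n, MeasurableSet (V n) := by
    intro n
    exact measurableSet_Icc.inter
      (MeasurableSet.biInter (Set.to_countable _) fun m _ => (hAmeas m).inter (hBmeas m))
  have hVmono : Monotone V := by
    intro n n' hnn'
    apply Set.inter_subset_inter_right
    exact Set.biInter_subset_biInter_left (Set.Ici_subset_Ici.mpr hnn')
  have hVunion : ⋃ n, V n = Set.Icc (0:ℝ) (2*Slen) := by
    apply Set.Subset.antisymm
    · exact Set.iUnion_subset fun n => Set.inter_subset_left
    · intro x hx
      have hball : ∀ᶠ y in 𝓝 (1:ℝ), |y - 1| ≤ ε := by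
        have := Metric.closedBall_mem_nhds (1:ℝ) hε
        filter_upwards [this] with y hy
        simpa [Real.dist_eq] using hy
      have e1 : ∀ᶠ m in atTop, |k (t m + x) / k (t m) - 1| ≤ ε :=
        ((hsv x).comp htend).eventually hball
      have e2 : ∀ᶠ m in atTop, |k (t m + s m + x) / k (t m + s m) - 1| ≤ ε :=
        ((hsv x).comp htend2).eventually hball
      obtain ⟨N, hN⟩ := (e1.and e2).exists_forall_of_atTop
      refine Set.mem_iUnion.mpr ⟨N, hx, ?_⟩
      simp only [Set.mem_iInter, Set.mem_inter_iff]
      intro m hm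
      exact ⟨(hN m hm).1, (hN m hm).2⟩
  -- measure argument to find a good point
  have hVsub : ∀ n, V n ⊆ Set.Icc (0:ℝ) (2*Slen) := fun n => Set.inter_subset_left
  have hgood : ∃ n x, x ∈ V n ∧ s n + x ∈ V n := by
    have hμ := tendsto_measure_iUnion_atTop (μ := volume) hVmono
    rw [hVunion, Real.volume_Icc] at hμ
    have hlt : ENNReal.ofReal (3/2 * Slen) < ENNReal.ofReal (2*Slen - 0) := by
      rw [ENNReal.ofReal_lt_ofReal_iff (by linarith)]
      linarith
    obtain ⟨n, hn⟩ := (hμ.eventually (eventually_gt_nhds hlt)).exists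
    set B' := (fun x => s n + x) ⁻¹' V n with hB'_def
    have hB'meas : MeasurableSet B' := (measurable_const_add (s n)) (hVmeas n)
    have hB'vol : volume B' = volume (V n) := measure_preimage_add volume (s n) (V n)
    have hsub : V n ∪ B' ⊆ Set.Icc (-Slen) (2*Slen) := by
      rintro x (hx | hx)
      · exact ⟨by linarith [(hVsub n hx).1], (hVsub n hx).2⟩
      · have h1 := (hVsub n hx).1
        have h2 := (hVsub n hx).2
        have hs1 := (hsmem n).1
        have hs2 := (hsmem n).2
        simp only [Set.mem_preimage] at *
        exact ⟨by linarith, by linarith⟩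
    have hvolU : volume (V n ∪ B') ≤ ENNReal.ofReal (3 * Slen) := by
      calc volume (V n ∪ B') ≤ volume (Set.Icc (-Slen) (2*Slen)) := measure_mono hsub
      _ = ENNReal.ofReal (3 * Slen) := by rw [Real.volume_Icc]; ring_nf
    have hkey := measure_union_add_inter (μ := volume) (V n) hB'meas
    have hne : volume (V n ∩ B') ≠ 0 := by
      intro h0
      rw [h0, add_zero] at hkey
      have : ENNReal.ofReal (3 * Slen) < volume (V n) + volume B' := by
        rw [hB'vol]
        calc ENNReal.ofReal (3 * Slen)
            = ENNReal.ofReal (3/2 * Slen) + ENNReal.ofReal (3/2 * Slen) := by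
              rw [← ENNReal.ofReal_add (by linarith) (by linarith)]; ring_nf
        _ < volume (V n) + volume (V n) := by
            apply ENNReal.add_lt_add <;> simpa using hn
      rw [← hkey] at this
      exact absurd hvolU (not_le.mpr this)
    obtain ⟨x, hx1, hx2⟩ := nonempty_of_measure_ne_zero hne
    exact ⟨n, x, hx1, hx2⟩
  obtain ⟨n, x, hx1, hx2⟩ := hgood
  -- extract the four inequalities at m = n
  have hmem1 := hx1.2
  have hmem2 := hx2.2
  simp only [Set.mem_iInter, Set.mem_inter_iff] at hmem1 hmem2
  have c1 : |k (t n + (s n + x)) / k (t n) - 1| ≤ ε := (hmem2 n (Set.mem_Ici.mpr le_rfl)).1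
  have c2 : |k (t n + s n + x) / k (t n + s n) - 1| ≤ ε := (hmem1 n (Set.mem_Ici.mpr le_rfl)).2
  rw [show t n + (s n + x) = t n + s n + x by ring] at c1
  -- derive the contradiction
  set X := k (t n + s n + x) with hX
  set K0 := k (t n) with hK0
  set K1 := k (t n + s n) with hK1
  have hX0 : 0 < X := hkpos _
  have hK00 : 0 < K0 := hkpos _
  have hK10 : 0 < K1 := hkpos _
  rw [abs_le] at c1 c2
  have ha1 : 1 - ε ≤ X / K0 := by linarith [c1.1]
  have ha2 : X / K0 ≤ 1 + ε := by linarith [c1.2]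
  have hb1 : 1 - ε ≤ X / K1 := by linarith [c2.1]
  have hb2 : X / K1 ≤ 1 + ε := by linarith [c2.2]
  have hgoal : |K1 / K0 - 1| ≤ 4 * ε := by
    have hr : K1 / K0 = (X / K0) / (X / K1) := by
      field_simp
    have hbpos : (0:ℝ) < X / K1 := div_pos hX0 hK10
    rw [abs_le, hr]
    constructor
    · have hgb : (1 - 4*ε) * (X / K1) ≤ X / K0 := by nlinarith
      have := (le_div_iff₀ hbpos).mpr hgb
      linarith
    · have hgb : X / K0 ≤ (1 + 4*ε) * (X / K1) := by nlinarith
      have := (div_le_iff₀ hbpos).mpr hgb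
      linarith
  exact absurd hgoal (not_le.mpr (hbad n))

lemma uct (h : ℝ → ℝ) (hmeas : Measurable h) (hpos : ∀ u, 0 < h u)
    (hsv : ∀ x : ℝ, 0 < x → Tendsto (fun u => h (u * x) / h u) atTop (𝓝 1))
    (c ε : ℝ) (hc : 1 < c) (hε : 0 < ε) :
    ∀ᶠ u in atTop, ∀ x ∈ Set.Icc 1 c, |h (u * x) / h u - 1| ≤ ε := by
  set k : ℝ → ℝ := fun t => h (Real.exp t) with hk_def
  have hk : Measurable k := hmeas.comp Real.measurable_exp
  have hkpos : ∀ t, 0 < k t := fun t => hpos _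
  have hksv : ∀ s : ℝ, Tendsto (fun t => k (t + s) / k t) atTop (𝓝 1) := by
    intro s
    have h1 := (hsv (Real.exp s) (Real.exp_pos s)).comp Real.tendsto_exp_atTop
    refine h1.congr fun t => ?_
    simp only [Function.comp_apply, hk_def, Real.exp_add]
  set ε' := min (ε/4) (1/2) with hε'_def
  have hε' : 0 < ε' := lt_min (by linarith) one_half_pos
  have h4 : 4 * ε' ≤ ε := by
    rcases le_total (ε/4) (1/2) with h|h
    · rw [hε'_def, min_eq_left h]; linarith
    · rw [hε'_def, min_eq_right h]; linarith
  have key := uct_aux k hk hkpos hksv (Real.log c) ε' (Real.log_pos hc) hε' (min_le_right _ _)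
  rw [Filter.eventually_atTop] at key ⊢
  obtain ⟨T, hT⟩ := key
  refine ⟨max (Real.exp T) 1, fun u hu x hx => ?_⟩
  have hu1 : (1:ℝ) ≤ u := le_trans (le_max_right _ _) hu
  have hu0 : (0:ℝ) < u := lt_of_lt_of_le one_pos hu1
  have hx0 : (0:ℝ) < x := lt_of_lt_of_le one_pos hx.1
  have hlogu : T ≤ Real.log u := by
    rw [Real.le_log_iff_exp_le hu0]
    exact le_trans (le_max_left _ _) hu
  have hlogx : Real.log x ∈ Set.Icc 0 (Real.log c) :=
    ⟨Real.log_nonneg hx.1, Real.log_le_log hx0 hx.2⟩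
  have hres := hT (Real.log u) hlogu (Real.log x) hlogx
  rw [show Real.log u + Real.log x = Real.log (u*x) from
    (Real.log_mul (ne_of_gt hu0) (ne_of_gt hx0)).symm] at hres
  have : k (Real.log (u*x)) / k (Real.log u) = h (u*x) / h u := by
    simp only [hk_def, Real.exp_log hu0, Real.exp_log (by positivity : (0:ℝ) < u*x)]
  rw [this] at hres
  linarith

lemma tail_prod {Ω : Type*} [MeasureSpace Ω] [IsProbabilityMeasure (ℙ : Measure Ω)]
    {S X : Ω → ℝ} (hS : Measurable S) (hX : Measurable X)
    (hind : IndepFun S X ℙ) (u : ℝ) :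
    ℙ {ω | S ω * X ω > u} = ∫⁻ s, ℙ {ω | s * X ω > u} ∂((ℙ : Measure Ω).map S) := by
  have hmap : (ℙ : Measure Ω).map (fun ω => (S ω, X ω)) = ((ℙ : Measure Ω).map S).prod ((ℙ : Measure Ω).map X) :=
    (indepFun_iff_map_prod_eq_prod_map_map hS.aemeasurable hX.aemeasurable).mp hind
  have hset : MeasurableSet {p : ℝ × ℝ | p.1 * p.2 > u} :=
    measurableSet_lt measurable_const (measurable_fst.mul measurable_snd)
  have h1 : {ω | S ω * X ω > u} = (fun ω => (S ω, X ω)) ⁻¹' {p | p.1 * p.2 > u} := rfl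
  rw [h1, ← Measure.map_apply (hS.prodMk hX) hset, hmap, Measure.prod_apply hset]
  congr 1
  ext s
  have h2 : Prod.mk s ⁻¹' {p : ℝ × ℝ | p.1 * p.2 > u} = {x | s * x > u} := rfl
  rw [h2, Measure.map_apply hX (by exact measurableSet_lt measurable_const (measurable_const.mul measurable_id))]
  rfl

set_option maxHeartbeats 1000000 in
theorem random_contraction_tail_equivalence
    {Ω : Type*} [MeasureSpace Ω] [IsProbabilityMeasure (ℙ : Measure Ω)]
    (S Y Ystar : Ω → ℝ) (hS : Measurable S) (hY : Measurable Y) (hYstar : Measurable Ystar)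
    (hindep : iIndepFun (m := fun _ : Fin 3 => Real.measurableSpace) ![S, Y, Ystar] ℙ)
    (hS0 : ∀ᵐ ω ∂ℙ, 0 ≤ S ω) (hS1 : ∀ᵐ ω ∂ℙ, S ω ≤ 1)
    (hSend : ∀ w : ℝ, w < 1 → 0 < ℙ {ω | S ω > w})
    (hYpos : ∀ᵐ ω ∂ℙ, 0 ≤ Y ω) (hYstarpos : ∀ᵐ ω ∂ℙ, 0 ≤ Ystar ω)
    (hYend : ∀ u : ℝ, 0 < ℙ {ω | Y ω > u})
    (hrap : ∀ l : ℝ, 1 < l →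
      Tendsto (fun u => (ℙ {ω | Y ω > l * u}).toReal / (ℙ {ω | Y ω > u}).toReal)
        atTop (𝓝 0))
    (L : ℝ → ℝ) (hLpos : ∀ u > 0, 0 < L u) (hL : RegularlyVarying L 0)
    (htailEq : Tendsto (fun u => (ℙ {ω | Y ω > u}).toReal /
        (L u * (ℙ {ω | Ystar ω > u}).toReal)) atTop (𝓝 1)) :
    Tendsto (fun u => (ℙ {ω | S ω * Y ω > u}).toReal /
        (L u * (ℙ {ω | S ω * Ystar ω > u}).toReal)) atTop (𝓝 1) := by
  -- pairwise independence
  have hSY : IndepFun S Y ℙ := by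
    have := hindep.indepFun (i := 0) (j := 1) (by decide)
    simpa using this
  have hSYstar : IndepFun S Ystar ℙ := by
    have := hindep.indepFun (i := 0) (j := 2) (by decide)
    simpa using this
  -- real tail functions
  set Fb : ℝ → ℝ := fun u => (ℙ {ω | Y ω > u}).toReal with hFb_def
  set Gb : ℝ → ℝ := fun u => (ℙ {ω | Ystar ω > u}).toReal with hGb_def
  have hFbanti : Antitone Fb := by
    intro a b hab
    exact ENNReal.toReal_mono (measure_ne_top _ _)
      (measure_mono (fun ω (hω : Y ω > b) => lt_of_le_of_lt hab hω))
  have hGbanti : Antitone Gb := by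
    intro a b hab
    exact ENNReal.toReal_mono (measure_ne_top _ _)
      (measure_mono (fun ω (hω : Ystar ω > b) => lt_of_le_of_lt hab hω))
  have hFbpos : ∀ u, 0 < Fb u := fun u =>
    ENNReal.toReal_pos (hYend u).ne' (measure_ne_top _ _)
  have htailEq' : Tendsto (fun u => Fb u / (L u * Gb u)) atTop (𝓝 1) := htailEq
  have hrap' : ∀ l : ℝ, 1 < l → Tendsto (fun u => Fb (l*u) / Fb u) atTop (𝓝 0) := hrap
  have hGbpos : ∀ u : ℝ, 0 < Gb u := by
    have hev : ∀ᶠ u in atTop, 0 < Gb u := by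
      filter_upwards [htailEq'.eventually_const_lt (show (1:ℝ)/2 < 1 by norm_num)] with v hv
      rcases lt_or_ge 0 (Gb v) with h | h
      · exact h
      · exfalso
        have h0 : Gb v = 0 := le_antisymm h ENNReal.toReal_nonneg
        rw [h0, mul_zero, div_zero] at hv
        norm_num at hv
    intro u
    obtain ⟨v, hv1, hv2⟩ := (hev.and (eventually_ge_atTop u)).exists
    exact lt_of_lt_of_le hv1 (hGbanti hv2)
  -- the measurable slowly varying ratio
  set hh : ℝ → ℝ := fun u => Fb u / Gb u with hhh_def
  have hhpos : ∀ u, 0 < hh u := fun u => div_pos (hFbpos u) (hGbpos u)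
  have hhmeas : Measurable hh := hFbanti.measurable.div hGbanti.measurable
  have hLh : Tendsto (fun u => hh u / L u) atTop (𝓝 1) := by
    apply htailEq'.congr fun u => ?_
    show Fb u / (L u * Gb u) = Fb u / Gb u / L u
    rw [div_div, mul_comm]
  have hhL : Tendsto (fun u => L u / hh u) atTop (𝓝 1) := by
    have := hLh.inv₀ one_ne_zero
    rw [inv_one] at this
    apply this.congr fun u => ?_
    rw [inv_div]
  have hhsv : ∀ x : ℝ, 0 < x → Tendsto (fun u => hh (u*x) / hh u) atTop (𝓝 1) := by
    intro x hx
    have hmulx : Tendsto (fun u : ℝ => u * x) atTop atTop :=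
      Tendsto.atTop_mul_const hx tendsto_id
    have h1 : Tendsto (fun u => hh (u*x) / L (u*x)) atTop (𝓝 1) := by
      have := hLh.comp hmulx
      exact this
    have h2 := hL x hx
    rw [Real.rpow_zero] at h2
    have h3 := (h1.mul h2).mul hhL
    rw [show ((1:ℝ)*1)*1 = 1 by norm_num] at h3
    apply Tendsto.congr' _ h3
    filter_upwards [eventually_gt_atTop 0] with u hu
    have hL1 : L u ≠ 0 := (hLpos u hu).ne'
    have hL2 : L (u*x) ≠ 0 := (hLpos _ (by positivity)).ne'
    have hhu : hh u ≠ 0 := (hhpos u).ne'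
    field_simp
  have hGrap : ∀ l : ℝ, 1 < l → Tendsto (fun u => Gb (l*u) / Gb u) atTop (𝓝 0) := by
    intro l hl
    have h2 : Tendsto (fun u => hh u / hh (l*u)) atTop (𝓝 1) := by
      have h3 := hhsv l (by linarith)
      have h4 := h3.inv₀ one_ne_zero
      rw [inv_one] at h4
      apply h4.congr fun u => ?_
      rw [inv_div, mul_comm u l]
    have h5 := (hrap' l hl).mul h2
    rw [zero_mul] at h5
    apply h5.congr fun u => ?_
    show Fb (l*u) / Fb u * (Fb u / Gb u / (Fb (l*u) / Gb (l*u))) = Gb (l*u) / Gb u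
    have f1 := (hFbpos u).ne'
    have f2 := (hFbpos (l*u)).ne'
    have g1 := (hGbpos u).ne'
    have g2 := (hGbpos (l*u)).ne'
    field_simp
  -- distribution of S and disintegration
  set μ : Measure ℝ := (ℙ : Measure Ω).map S with hμ_def
  haveI hμprob : IsProbabilityMeasure μ := Measure.isProbabilityMeasure_map hS.aemeasurable
  have hTf : ∀ u : ℝ, ℙ {ω | S ω * Y ω > u} = ∫⁻ s, ℙ {ω | s * Y ω > u} ∂μ :=
    fun u => tail_prod hS hY hSY u
  have hTstarf : ∀ u : ℝ, ℙ {ω | S ω * Ystar ω > u} = ∫⁻ s, ℙ {ω | s * Ystar ω > u} ∂μ :=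
    fun u => tail_prod hS hYstar hSYstar u
  have haeS : ∀ᵐ s ∂μ, s ∈ Set.Icc (0:ℝ) 1 := by
    rw [hμ_def]
    apply (ae_map_iff hS.aemeasurable measurableSet_Icc).mpr
    filter_upwards [hS0, hS1] with ω h1 h2
    exact ⟨h1, h2⟩
  set p : ℝ := (ℙ {ω | S ω > (3/4 : ℝ)}).toReal with hp_def
  have hp : 0 < p := ENNReal.toReal_pos (hSend _ (by norm_num)).ne' (measure_ne_top _ _)
  have hTstarLB : ∀ u : ℝ, 0 < u →
      ENNReal.ofReal (p * Gb (4/3*u)) ≤ ℙ {ω | S ω * Ystar ω > u} := by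
    intro u hu
    have hsub : {ω | S ω > (3/4:ℝ)} ∩ {ω | Ystar ω > 4/3*u} ⊆ {ω | S ω * Ystar ω > u} := by
      rintro ω ⟨h1, h2⟩
      show u < S ω * Ystar ω
      calc u = (3/4:ℝ) * (4/3*u) := by ring
      _ < S ω * Ystar ω := by
          apply mul_lt_mul'' h1 h2 (by norm_num) (by positivity)
    have hmul : ℙ ({ω | S ω > (3/4:ℝ)} ∩ {ω | Ystar ω > 4/3*u})
        = ℙ {ω | S ω > (3/4:ℝ)} * ℙ {ω | Ystar ω > 4/3*u} :=
      hSYstar.measure_inter_preimage_eq_mul (Set.Ioi (3/4:ℝ)) (Set.Ioi (4/3*u))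
        measurableSet_Ioi measurableSet_Ioi
    calc ENNReal.ofReal (p * Gb (4/3*u))
        = ℙ {ω | S ω > (3/4:ℝ)} * ℙ {ω | Ystar ω > 4/3*u} := by
          rw [ENNReal.ofReal_mul hp.le, hp_def,
            ENNReal.ofReal_toReal (measure_ne_top _ _),
            ENNReal.ofReal_toReal (measure_ne_top _ _)]
    _ = ℙ ({ω | S ω > (3/4:ℝ)} ∩ {ω | Ystar ω > 4/3*u}) := hmul.symm
    _ ≤ ℙ {ω | S ω * Ystar ω > u} := measure_mono hsub
  have hmain : ∀ ε : ℝ, 0 < ε → ε ≤ 1/2 → ∀ᶠ u in atTop,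
      (1-ε) * ((1-ε) * (hh u * (ℙ {ω | S ω * Ystar ω > u}).toReal))
        ≤ (ℙ {ω | S ω * Y ω > u}).toReal ∧
      (ℙ {ω | S ω * Y ω > u}).toReal
        ≤ (1+ε) * ((1+ε) * (hh u * (ℙ {ω | S ω * Ystar ω > u}).toReal)) := by
    intro ε hε hε2
    have hU := uct hh hhmeas hhpos hhsv 2 ε one_lt_two hε
    have hsmall : ∀ᶠ u in atTop, Gb (2*u) ≤ ε * (p * Gb (4/3*u)) := by
      have h1 := hGrap (3/2) (by norm_num)
      have hmul : Tendsto (fun u : ℝ => 4/3*u) atTop atTop :=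
        Tendsto.const_mul_atTop (show (0:ℝ) < 4/3 by norm_num) tendsto_id
      have h2 : Tendsto (fun u => Gb (2*u) / Gb (4/3*u)) atTop (𝓝 0) := by
        have h3 := h1.comp hmul
        apply h3.congr fun u => ?_
        show Gb (3/2 * (4/3*u)) / Gb (4/3*u) = _
        rw [show (3:ℝ)/2 * (4/3*u) = 2*u by ring]
      filter_upwards [h2.eventually_lt_const (show (0:ℝ) < ε*p from mul_pos hε hp)] with u hu
      have h4 := (div_lt_iff₀ (hGbpos (4/3*u))).mp hu
      nlinarith [h4]
    filter_upwards [hU, hsmall, eventually_ge_atTop (1:ℝ)] with u hUu hsmallu hu1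
    have hu0 : (0:ℝ) < u := by linarith
    have hhub : ∀ v, u ≤ v → v ≤ 2*u → hh v ≤ (1+ε) * hh u := by
      intro v h1 h2
      have hx : v/u ∈ Set.Icc (1:ℝ) 2 :=
        ⟨(one_le_div₀ hu0).mpr h1, (div_le_iff₀ hu0).mpr (by linarith)⟩
      have h5 := hUu (v/u) hx
      rw [show u * (v/u) = v by field_simp, abs_le] at h5
      have h6 := h5.2
      have h7 : hh v / hh u ≤ 1 + ε := by linarith
      calc hh v = hh v / hh u * hh u := (div_mul_cancel₀ _ (hhpos u).ne').symm
      _ ≤ (1+ε) * hh u := mul_le_mul_of_nonneg_right h7 (hhpos u).le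
    have hhlb : ∀ v, u ≤ v → v ≤ 2*u → (1-ε) * hh u ≤ hh v := by
      intro v h1 h2
      have hx : v/u ∈ Set.Icc (1:ℝ) 2 :=
        ⟨(one_le_div₀ hu0).mpr h1, (div_le_iff₀ hu0).mpr (by linarith)⟩
      have h5 := hUu (v/u) hx
      rw [show u * (v/u) = v by field_simp, abs_le] at h5
      have h7 : 1 - ε ≤ hh v / hh u := by linarith [h5.1]
      calc (1-ε) * hh u ≤ hh v / hh u * hh u :=
        mul_le_mul_of_nonneg_right h7 (hhpos u).le
      _ = hh v := div_mul_cancel₀ _ (hhpos u).ne'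
    have hpart1 : ∀ X : Ω → ℝ, (∀ᵐ ω ∂ℙ, 0 ≤ X ω) →
        ∫⁻ s in Set.Iic (1/2:ℝ), ℙ {ω | s * X ω > u} ∂μ ≤ ℙ {ω | X ω > 2*u} := by
      intro X hXpos
      have hione : ∀ s ∈ Set.Iic (1/2:ℝ), ℙ {ω | s * X ω > u} ≤ ℙ {ω | X ω > 2*u} := by
        intro s hs
        apply measure_mono_ae
        filter_upwards [hXpos] with ω h0 hω
        have hω' : u < s * X ω := hω
        have h8 : s * X ω ≤ 1/2 * X ω :=
          mul_le_mul_of_nonneg_right hs h0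
        show 2*u < X ω
        linarith
      calc ∫⁻ s in Set.Iic (1/2:ℝ), ℙ {ω | s * X ω > u} ∂μ
          ≤ ∫⁻ s in Set.Iic (1/2:ℝ), ℙ {ω | X ω > 2*u} ∂μ :=
            setLIntegral_mono' measurableSet_Iic hione
      _ = ℙ {ω | X ω > 2*u} * μ (Set.Iic (1/2:ℝ)) := setLIntegral_const _ _
      _ ≤ ℙ {ω | X ω > 2*u} * 1 := mul_le_mul_right prob_le_one _
      _ = ℙ {ω | X ω > 2*u} := mul_one _
    have hcomp : ∀ᵐ s ∂μ, s ∈ Set.Ioi (1/2:ℝ) →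
        (ℙ {ω | s * Y ω > u} ≤ ENNReal.ofReal ((1+ε) * hh u) * ℙ {ω | s * Ystar ω > u} ∧
         ENNReal.ofReal ((1-ε) * hh u) * ℙ {ω | s * Ystar ω > u} ≤ ℙ {ω | s * Y ω > u}) := by
      filter_upwards [haeS] with s hs01 hs
      have hs0 : (0:ℝ) < s := lt_trans (by norm_num) hs
      have hiff : ∀ y : ℝ, (u < s * y) ↔ (u/s < y) := fun y => by
        rw [div_lt_iff₀ hs0, mul_comm]
      have hevY : {ω | s * Y ω > u} = {ω | Y ω > u/s} := by
        ext ω; exact hiff (Y ω)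
      have hevYstar : {ω | s * Ystar ω > u} = {ω | Ystar ω > u/s} := by
        ext ω; exact hiff (Ystar ω)
      have hv1 : u ≤ u/s := by
        rw [le_div_iff₀ hs0]
        nlinarith [hs01.2]
      have hv2 : u/s ≤ 2*u := by
        rw [div_le_iff₀ hs0]
        nlinarith [Set.mem_Ioi.mp hs]
      have hFbGb : Fb (u/s) = hh (u/s) * Gb (u/s) :=
        (div_mul_cancel₀ _ (hGbpos (u/s)).ne').symm
      constructor
      · rw [hevY, hevYstar]
        calc ℙ {ω | Y ω > u/s} = ENNReal.ofReal (Fb (u/s)) :=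
              (ENNReal.ofReal_toReal (measure_ne_top _ _)).symm
        _ ≤ ENNReal.ofReal ((1+ε) * hh u * Gb (u/s)) := by
            apply ENNReal.ofReal_le_ofReal
            rw [hFbGb]
            exact mul_le_mul_of_nonneg_right (hhub _ hv1 hv2) (hGbpos _).le
        _ = ENNReal.ofReal ((1+ε) * hh u) * ENNReal.ofReal (Gb (u/s)) :=
            ENNReal.ofReal_mul (by nlinarith [hhpos u])
        _ = ENNReal.ofReal ((1+ε) * hh u) * ℙ {ω | Ystar ω > u/s} := by
            rw [ENNReal.ofReal_toReal (measure_ne_top _ _)]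
      · rw [hevY, hevYstar]
        calc ENNReal.ofReal ((1-ε) * hh u) * ℙ {ω | Ystar ω > u/s}
            = ENNReal.ofReal ((1-ε) * hh u) * ENNReal.ofReal (Gb (u/s)) := by
              rw [ENNReal.ofReal_toReal (measure_ne_top _ _)]
        _ = ENNReal.ofReal ((1-ε) * hh u * Gb (u/s)) :=
            (ENNReal.ofReal_mul (by nlinarith [hhpos u])).symm
        _ ≤ ENNReal.ofReal (Fb (u/s)) := by
            apply ENNReal.ofReal_le_ofReal
            rw [hFbGb]
            exact mul_le_mul_of_nonneg_right (hhlb _ hv1 hv2) (hGbpos _).le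
        _ = ℙ {ω | Y ω > u/s} := ENNReal.ofReal_toReal (measure_ne_top _ _)
    have hsplitY := lintegral_add_compl (μ := μ)
      (fun s => ℙ {ω | s * Y ω > u}) (measurableSet_Iic (a := (1/2:ℝ)))
    have hsplitYstar := lintegral_add_compl (μ := μ)
      (fun s => ℙ {ω | s * Ystar ω > u}) (measurableSet_Iic (a := (1/2:ℝ)))
    rw [Set.compl_Iic] at hsplitY hsplitYstar
    have hI2Yub : ∫⁻ s in Set.Ioi (1/2:ℝ), ℙ {ω | s * Y ω > u} ∂μ
        ≤ ENNReal.ofReal ((1+ε) * hh u) * ∫⁻ s in Set.Ioi (1/2:ℝ), ℙ {ω | s * Ystar ω > u} ∂μ := by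
      calc ∫⁻ s in Set.Ioi (1/2:ℝ), ℙ {ω | s * Y ω > u} ∂μ
          ≤ ∫⁻ s in Set.Ioi (1/2:ℝ), ENNReal.ofReal ((1+ε) * hh u) * ℙ {ω | s * Ystar ω > u} ∂μ :=
            setLIntegral_mono_ae' measurableSet_Ioi (hcomp.mono fun s h hs => (h hs).1)
      _ = ENNReal.ofReal ((1+ε) * hh u) * ∫⁻ s in Set.Ioi (1/2:ℝ), ℙ {ω | s * Ystar ω > u} ∂μ :=
            lintegral_const_mul' _ _ ENNReal.ofReal_ne_top
    have hI2Ylb : ENNReal.ofReal ((1-ε) * hh u) * ∫⁻ s in Set.Ioi (1/2:ℝ), ℙ {ω | s * Ystar ω > u} ∂μ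
        ≤ ∫⁻ s in Set.Ioi (1/2:ℝ), ℙ {ω | s * Y ω > u} ∂μ := by
      rw [← lintegral_const_mul' _ _ (ENNReal.ofReal_ne_top (r := (1-ε) * hh u))]
      exact setLIntegral_mono_ae' measurableSet_Ioi (hcomp.mono fun s h hs => (h hs).2)
    have hFb2u : ℙ {ω | Y ω > 2*u} ≤ ENNReal.ofReal ((1+ε) * hh u * ε) * ℙ {ω | S ω * Ystar ω > u} := by
      have e1 : hh (2*u) * Gb (2*u) = Fb (2*u) := div_mul_cancel₀ _ (hGbpos (2*u)).ne'
      have e2 : hh (2*u) ≤ (1+ε) * hh u := hhub (2*u) (by linarith) le_rfl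
      have hreal : Fb (2*u) ≤ (1+ε) * hh u * ε * (p * Gb (4/3*u)) := by
        nlinarith [hGbpos (2*u), hhpos (2*u), hhpos u, hGbpos (4/3*u), hp]
      calc ℙ {ω | Y ω > 2*u} = ENNReal.ofReal (Fb (2*u)) :=
            (ENNReal.ofReal_toReal (measure_ne_top _ _)).symm
      _ ≤ ENNReal.ofReal ((1+ε) * hh u * ε * (p * Gb (4/3*u))) := ENNReal.ofReal_le_ofReal hreal
      _ = ENNReal.ofReal ((1+ε) * hh u * ε) * ENNReal.ofReal (p * Gb (4/3*u)) :=
            ENNReal.ofReal_mul (mul_nonneg (mul_nonneg (by linarith) (hhpos u).le) hε.le)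
      _ ≤ ENNReal.ofReal ((1+ε) * hh u * ε) * ℙ {ω | S ω * Ystar ω > u} :=
            mul_le_mul_right (hTstarLB u hu0) _
    have hTub : ℙ {ω | S ω * Y ω > u}
        ≤ ENNReal.ofReal ((1+ε) * hh u * ε) * ℙ {ω | S ω * Ystar ω > u}
          + ENNReal.ofReal ((1+ε) * hh u) * ℙ {ω | S ω * Ystar ω > u} := by
      rw [hTf u, ← hsplitY]
      apply add_le_add
      · exact le_trans (hpart1 Y hYpos) hFb2u
      · refine le_trans hI2Yub (mul_le_mul_right ?_ _)
        rw [hTstarf u, ← hsplitYstar]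
        exact le_add_self
    have hI1starub : ∫⁻ s in Set.Iic (1/2:ℝ), ℙ {ω | s * Ystar ω > u} ∂μ
        ≤ ENNReal.ofReal ε * ℙ {ω | S ω * Ystar ω > u} := by
      calc ∫⁻ s in Set.Iic (1/2:ℝ), ℙ {ω | s * Ystar ω > u} ∂μ
          ≤ ℙ {ω | Ystar ω > 2*u} := hpart1 Ystar hYstarpos
      _ = ENNReal.ofReal (Gb (2*u)) := (ENNReal.ofReal_toReal (measure_ne_top _ _)).symm
      _ ≤ ENNReal.ofReal (ε * (p * Gb (4/3*u))) := ENNReal.ofReal_le_ofReal hsmallu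
      _ = ENNReal.ofReal ε * ENNReal.ofReal (p * Gb (4/3*u)) := ENNReal.ofReal_mul hε.le
      _ ≤ ENNReal.ofReal ε * ℙ {ω | S ω * Ystar ω > u} := mul_le_mul_right (hTstarLB u hu0) _
    have hI2starlb : ENNReal.ofReal (1-ε) * ℙ {ω | S ω * Ystar ω > u}
        ≤ ∫⁻ s in Set.Ioi (1/2:ℝ), ℙ {ω | s * Ystar ω > u} ∂μ := by
      have hfin2 : ENNReal.ofReal ε * ℙ {ω | S ω * Ystar ω > u} ≠ ⊤ :=
        ENNReal.mul_ne_top ENNReal.ofReal_ne_top (measure_ne_top _ _)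
      rw [← ENNReal.add_le_add_iff_right hfin2]
      calc ENNReal.ofReal (1-ε) * ℙ {ω | S ω * Ystar ω > u}
            + ENNReal.ofReal ε * ℙ {ω | S ω * Ystar ω > u}
          = ℙ {ω | S ω * Ystar ω > u} := by
            rw [← add_mul, ← ENNReal.ofReal_add (by linarith) hε.le]
            norm_num
      _ = _ + _ := by rw [hTstarf u, ← hsplitYstar]
      _ ≤ _ := by
            rw [add_comm]
            exact add_le_add_right hI1starub _
    have hTlb : ENNReal.ofReal ((1-ε) * hh u) * (ENNReal.ofReal (1-ε) * ℙ {ω | S ω * Ystar ω > u})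
        ≤ ℙ {ω | S ω * Y ω > u} := by
      calc ENNReal.ofReal ((1-ε) * hh u) * (ENNReal.ofReal (1-ε) * ℙ {ω | S ω * Ystar ω > u})
          ≤ ENNReal.ofReal ((1-ε) * hh u) * ∫⁻ s in Set.Ioi (1/2:ℝ), ℙ {ω | s * Ystar ω > u} ∂μ :=
            mul_le_mul_right hI2starlb _
      _ ≤ ∫⁻ s in Set.Ioi (1/2:ℝ), ℙ {ω | s * Y ω > u} ∂μ := hI2Ylb
      _ ≤ ℙ {ω | S ω * Y ω > u} := by
            rw [hTf u, ← hsplitY]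
            exact le_add_self
    have hhunn : 0 ≤ (1-ε) * hh u := by nlinarith [hhpos u]
    constructor
    · have hr := ENNReal.toReal_mono (measure_ne_top _ _) hTlb
      rw [ENNReal.toReal_mul, ENNReal.toReal_mul, ENNReal.toReal_ofReal hhunn,
        ENNReal.toReal_ofReal (by linarith)] at hr
      calc (1-ε) * ((1-ε) * (hh u * (ℙ {ω | S ω * Ystar ω > u}).toReal))
          = (1-ε) * hh u * ((1-ε) * (ℙ {ω | S ω * Ystar ω > u}).toReal) := by ring
      _ ≤ (ℙ {ω | S ω * Y ω > u}).toReal := hr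
    · have hfinrhs : ENNReal.ofReal ((1+ε) * hh u * ε) * ℙ {ω | S ω * Ystar ω > u}
          + ENNReal.ofReal ((1+ε) * hh u) * ℙ {ω | S ω * Ystar ω > u} ≠ ⊤ :=
        ENNReal.add_ne_top.mpr
          ⟨ENNReal.mul_ne_top ENNReal.ofReal_ne_top (measure_ne_top _ _),
           ENNReal.mul_ne_top ENNReal.ofReal_ne_top (measure_ne_top _ _)⟩
      have hr := ENNReal.toReal_mono hfinrhs hTub
      rw [ENNReal.toReal_add
            (ENNReal.mul_ne_top ENNReal.ofReal_ne_top (measure_ne_top _ _))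
            (ENNReal.mul_ne_top ENNReal.ofReal_ne_top (measure_ne_top _ _)),
          ENNReal.toReal_mul, ENNReal.toReal_mul,
          ENNReal.toReal_ofReal (mul_nonneg (mul_nonneg (by linarith) (hhpos u).le) hε.le),
          ENNReal.toReal_ofReal (mul_nonneg (by linarith) (hhpos u).le)] at hr
      have h9 : (1+ε) * hh u * ε * (ℙ {ω | S ω * Ystar ω > u}).toReal
            + (1+ε) * hh u * (ℙ {ω | S ω * Ystar ω > u}).toReal
          = (1+ε) * ((1+ε) * (hh u * (ℙ {ω | S ω * Ystar ω > u}).toReal)) := by ring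
      linarith

  -- positivity of the denominator, eventually
  have hTspos : ∀ᶠ u in atTop, 0 < (ℙ {ω | S ω * Ystar ω > u}).toReal := by
    filter_upwards [eventually_gt_atTop (0:ℝ)] with u hu
    have h1 := hTstarLB u hu
    have h2 : (0:ℝ) < p * Gb (4/3*u) := mul_pos hp (hGbpos _)
    have h3 := ENNReal.toReal_mono (measure_ne_top _ _) h1
    rw [ENNReal.toReal_ofReal h2.le] at h3
    linarith
  -- the intermediate ratio tends to 1
  have hmid : Tendsto (fun u => (ℙ {ω | S ω * Y ω > u}).toReal /
      (hh u * (ℙ {ω | S ω * Ystar ω > u}).toReal)) atTop (𝓝 1) := by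
    rw [Metric.tendsto_nhds]
    intro ε hε
    set ε0 : ℝ := min (ε/4) (1/2) with hε0_def
    have hε0 : 0 < ε0 := lt_min (by linarith) one_half_pos
    have hε0h : ε0 ≤ 1/2 := min_le_right _ _
    have hε0e : 4 * ε0 ≤ ε := by
      rcases le_total (ε/4) (1/2) with h|h
      · rw [hε0_def, min_eq_left h]; linarith
      · rw [hε0_def, min_eq_right h]; linarith
    filter_upwards [hmain ε0 hε0 hε0h, hTspos] with u hu hts
    obtain ⟨hlo, hhi⟩ := hu
    have hden : 0 < hh u * (ℙ {ω | S ω * Ystar ω > u}).toReal :=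
      mul_pos (hhpos u) hts
    rw [Real.dist_eq, abs_lt]
    have hlo2 : (1-ε0) * (1-ε0)
        ≤ (ℙ {ω | S ω * Y ω > u}).toReal / (hh u * (ℙ {ω | S ω * Ystar ω > u}).toReal) := by
      rw [le_div_iff₀ hden]
      calc (1-ε0) * (1-ε0) * (hh u * (ℙ {ω | S ω * Ystar ω > u}).toReal)
          = (1-ε0) * ((1-ε0) * (hh u * (ℙ {ω | S ω * Ystar ω > u}).toReal)) := by ring
      _ ≤ _ := hlo
    have hhi2 : (ℙ {ω | S ω * Y ω > u}).toReal / (hh u * (ℙ {ω | S ω * Ystar ω > u}).toReal)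
        ≤ (1+ε0) * (1+ε0) := by
      rw [div_le_iff₀ hden]
      calc (ℙ {ω | S ω * Y ω > u}).toReal
          ≤ (1+ε0) * ((1+ε0) * (hh u * (ℙ {ω | S ω * Ystar ω > u}).toReal)) := hhi
      _ = (1+ε0) * (1+ε0) * (hh u * (ℙ {ω | S ω * Ystar ω > u}).toReal) := by ring
    constructor
    · nlinarith
    · nlinarith
  -- combine with hh/L → 1
  have hfin := hmid.mul hLh
  rw [mul_one] at hfin
  apply Tendsto.congr' _ hfin
  filter_upwards [] with u
  have hhu : hh u ≠ 0 := (hhpos u).ne'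
  show (ℙ {ω | S ω * Y ω > u}).toReal / (hh u * (ℙ {ω | S ω * Ystar ω > u}).toReal) * (hh u / L u)
      = (ℙ {ω | S ω * Y ω > u}).toReal / (L u * (ℙ {ω | S ω * Ystar ω > u}).toReal)
  rw [div_mul_div_comm, mul_comm (hh u * (ℙ {ω | S ω * Ystar ω > u}).toReal) (L u)]
  rw [show (ℙ {ω | S ω * Y ω > u}).toReal * hh u = hh u * (ℙ {ω | S ω * Y ω > u}).toReal by ring,
      show L u * (hh u * (ℙ {ω | S ω * Ystar ω > u}).toReal) = hh u * (L u * (ℙ {ω | S ω * Ystar ω > u}).toReal) by ring]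
  rw [mul_div_mul_left _ _ hhu]
end

section
/- Let Y1, Y2 be independent positive random variables satisfying log P(Y_i > u)/u^{p_i} → -L_i as u → ∞ (i = 1, 2) for positive constants p_i, L_i. Then log P(Y1Y2 > u)/u^{p1 p2/(p1+p2)} → -B as u → ∞, where A = ((p1 L1)/(p2 L2))^{1/(p1+p2)} and B = L1 A^{-p1} + L2 A^{p2}. -/
open Filter Topology Real

/-- Discrete IVT. -/
lemma exists_step_aux (f : ℕ → ℝ) (y : ℝ) :
    ∀ n : ℕ, f 0 < y → y ≤ f n → ∃ k < n, f k < y ∧ y ≤ f (k + 1) := by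
  intro n
  induction n with
  | zero => intro h0 hn; exact absurd (h0.trans_le hn) (lt_irrefl _)
  | succ m ih =>
    intro h0 hn
    by_cases hm : y ≤ f m
    · obtain ⟨k, hk, h⟩ := ih h0 hm
      exact ⟨k, hk.trans (Nat.lt_succ_self m), h⟩
    · exact ⟨m, Nat.lt_succ_self m, not_le.1 hm, hn⟩

/-- From the log-tail limit, the survival function is everywhere positive. -/
lemma surv_pos {f : ℝ → ℝ} {p L : ℝ} (hL : 0 < L)
    (hf0 : ∀ u, 0 ≤ f u) (hmono : ∀ ⦃u v : ℝ⦄, u ≤ v → f v ≤ f u)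
    (h : Tendsto (fun u => Real.log (f u) / u ^ p) atTop (𝓝 (-L))) :
    ∀ u, 0 < f u := by
  by_contra hc
  push_neg at hc
  obtain ⟨u₀, hu₀⟩ := hc
  have hz : ∀ v ≥ u₀, f v = 0 := fun v hv => le_antisymm (le_trans (hmono hv) hu₀) (hf0 v)
  have : Tendsto (fun u => Real.log (f u) / u ^ p) atTop (𝓝 0) := by
    apply Tendsto.congr' _ tendsto_const_nhds
    filter_upwards [eventually_ge_atTop u₀] with v hv
    simp [hz v hv]
  have := tendsto_nhds_unique this h
  linarith

/-- Eventually upper bound for the log of the survival function. -/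
lemma log_ev_le {f : ℝ → ℝ} {p L : ℝ} (hp : 0 < p)
    (h : Tendsto (fun u => Real.log (f u) / u ^ p) atTop (𝓝 (-L)))
    {δ : ℝ} (hδ : 0 < δ) :
    ∀ᶠ u in atTop, Real.log (f u) ≤ (-L + δ) * u ^ p := by
  have h1 : ∀ᶠ u in atTop, Real.log (f u) / u ^ p < -L + δ :=
    h.eventually (eventually_lt_nhds (by linarith))
  filter_upwards [h1, eventually_gt_atTop 0] with u hu hu0
  have hup : (0:ℝ) < u ^ p := Real.rpow_pos_of_pos hu0 p
  calc Real.log (f u) = Real.log (f u) / u ^ p * u ^ p := by field_simp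
  _ ≤ (-L + δ) * u ^ p := by nlinarith

/-- Eventually lower bound for the log of the survival function. -/
lemma log_ev_ge {f : ℝ → ℝ} {p L : ℝ} (hp : 0 < p)
    (h : Tendsto (fun u => Real.log (f u) / u ^ p) atTop (𝓝 (-L)))
    {δ : ℝ} (hδ : 0 < δ) :
    ∀ᶠ u in atTop, (-L - δ) * u ^ p ≤ Real.log (f u) := by
  have h1 : ∀ᶠ u in atTop, -L - δ < Real.log (f u) / u ^ p :=
    h.eventually (eventually_gt_nhds (by linarith))
  filter_upwards [h1, eventually_gt_atTop 0] with u hu hu0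
  have hup : (0:ℝ) < u ^ p := Real.rpow_pos_of_pos hu0 p
  calc (-L - δ) * u ^ p ≤ Real.log (f u) / u ^ p * u ^ p := by nlinarith
  _ = Real.log (f u) := by field_simp

section alg
variable {L₁ L₂ p₁ p₂ A B : ℝ} (hL₁ : 0 < L₁) (hL₂ : 0 < L₂) (hp₁ : 0 < p₁) (hp₂ : 0 < p₂)
  (hA : A = ((p₁ * L₁) / (p₂ * L₂)) ^ (1 / (p₁ + p₂)))
  (hB : B = L₁ * A ^ (-p₁) + L₂ * A ^ p₂)

include hL₁ hL₂ hp₁ hp₂ hA in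
lemma A_pos : 0 < A := by
  rw [hA]; exact Real.rpow_pos_of_pos (by positivity) _

include hL₁ hL₂ hp₁ hp₂ hA in
lemma A_pow : A ^ (p₁ + p₂) = (p₁ * L₁) / (p₂ * L₂) := by
  rw [hA, ← Real.rpow_mul (by positivity), one_div,
    inv_mul_cancel₀ (by positivity : p₁ + p₂ ≠ 0), Real.rpow_one]

include hL₁ hL₂ hp₁ hp₂ hA hB in
lemma B_pos : 0 < B := by
  have hA0 := A_pos hL₁ hL₂ hp₁ hp₂ hA
  rw [hB]
  have := Real.rpow_pos_of_pos hA0 (-p₁)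
  have := Real.rpow_pos_of_pos hA0 p₂
  positivity

include hL₁ hL₂ hp₁ hp₂ hA hB in
lemma B_id1 : L₁ * A ^ (-p₁) = B * (p₂ / (p₁ + p₂)) := by
  have hA0 := A_pos hL₁ hL₂ hp₁ hp₂ hA
  have hpow := A_pow hL₁ hL₂ hp₁ hp₂ hA
  have h1 : A ^ p₂ = A ^ (p₁ + p₂) * A ^ (-p₁) := by
    rw [← Real.rpow_add hA0]; ring_nf
  rw [hB, h1, hpow]
  have hAp : (0:ℝ) < A ^ (-p₁) := Real.rpow_pos_of_pos hA0 _
  field_simp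
  ring

include hL₁ hL₂ hp₁ hp₂ hA hB in
lemma B_id2 : L₂ * A ^ p₂ = B * (p₁ / (p₁ + p₂)) := by
  have h1 := B_id1 hL₁ hL₂ hp₁ hp₂ hA hB
  have hs : L₁ * A ^ (-p₁) + L₂ * A ^ p₂ = B := hB.symm
  have hpp : p₁ + p₂ ≠ 0 := by positivity
  field_simp at h1 ⊢
  linear_combination (p₁ + p₂) * hs - h1

include hL₁ hL₂ hp₁ hp₂ hA hB in
lemma key_ineq : ∀ c : ℝ, 0 < c → B ≤ L₁ * c ^ p₁ + L₂ * c ^ (-p₂) := by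
  intro c hc
  have hA0 := A_pos hL₁ hL₂ hp₁ hp₂ hA
  have hB0 := B_pos hL₁ hL₂ hp₁ hp₂ hA hB
  have hd0 : 0 < c * A := mul_pos hc hA0
  have e1 : L₁ * c ^ p₁ = B * (p₂ / (p₁ + p₂)) * (c * A) ^ p₁ := by
    have h : c ^ p₁ = (c * A) ^ p₁ * A ^ (-p₁) := by
      rw [Real.mul_rpow hc.le hA0.le, mul_assoc, ← Real.rpow_add hA0, add_neg_cancel,
        Real.rpow_zero, mul_one]
    rw [h]
    linear_combination ((c * A) ^ p₁) * B_id1 hL₁ hL₂ hp₁ hp₂ hA hB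
  have e2 : L₂ * c ^ (-p₂) = B * (p₁ / (p₁ + p₂)) * (c * A) ^ (-p₂) := by
    have h : c ^ (-p₂) = (c * A) ^ (-p₂) * A ^ p₂ := by
      rw [Real.mul_rpow hc.le hA0.le, mul_assoc, ← Real.rpow_add hA0, neg_add_cancel,
        Real.rpow_zero, mul_one]
    rw [h]
    linear_combination ((c * A) ^ (-p₂)) * B_id2 hL₁ hL₂ hp₁ hp₂ hA hB
  rw [e1, e2]
  have hgm := Real.geom_mean_le_arith_mean2_weighted
    (by positivity : (0:ℝ) ≤ p₂ / (p₁ + p₂)) (by positivity : (0:ℝ) ≤ p₁ / (p₁ + p₂))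
    (Real.rpow_pos_of_pos hd0 p₁).le (Real.rpow_pos_of_pos hd0 (-p₂)).le
    (by field_simp; ring)
  have hgeq : ((c * A) ^ p₁) ^ (p₂ / (p₁ + p₂)) * ((c * A) ^ (-p₂)) ^ (p₁ / (p₁ + p₂)) = 1 := by
    rw [← Real.rpow_mul hd0.le, ← Real.rpow_mul hd0.le, ← Real.rpow_add hd0,
      show p₁ * (p₂ / (p₁ + p₂)) + -p₂ * (p₁ / (p₁ + p₂)) = 0 by ring, Real.rpow_zero]
  calc B = B * (((c * A) ^ p₁) ^ (p₂ / (p₁ + p₂)) * ((c * A) ^ (-p₂)) ^ (p₁ / (p₁ + p₂))) := by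
        rw [hgeq, mul_one]
  _ ≤ B * (p₂ / (p₁ + p₂) * (c * A) ^ p₁ + p₁ / (p₁ + p₂) * (c * A) ^ (-p₂)) :=
      mul_le_mul_of_nonneg_left hgm hB0.le
  _ = B * (p₂ / (p₁ + p₂)) * (c * A) ^ p₁ + B * (p₁ / (p₁ + p₂)) * (c * A) ^ (-p₂) := by ring

end alg

set_option maxHeartbeats 1000000 in
lemma analytic_main {F₁ F₂ P : ℝ → ℝ} {L₁ L₂ p₁ p₂ A B : ℝ}
    (hL₁ : 0 < L₁) (hL₂ : 0 < L₂) (hp₁ : 0 < p₁) (hp₂ : 0 < p₂)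
    (hA : A = ((p₁ * L₁) / (p₂ * L₂)) ^ (1 / (p₁ + p₂)))
    (hB : B = L₁ * A ^ (-p₁) + L₂ * A ^ p₂)
    (hF₁pos : ∀ u, 0 < F₁ u) (hF₂pos : ∀ u, 0 < F₂ u)
    (hPlow : ∀ a b : ℝ, 0 < a → 0 < b → F₁ a * F₂ b ≤ P (a * b))
    (hPup : ∀ u : ℝ, 0 < u → ∀ (n : ℕ) (X : ℕ → ℝ), 0 < X 0 →
      P u ≤ F₂ (u / X 0) + F₁ (X n) + ∑ k ∈ Finset.range n, F₁ (X k) * F₂ (u / X (k+1)))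
    (h₁ : Filter.Tendsto (fun u => Real.log (F₁ u) / u ^ p₁) atTop (𝓝 (-L₁)))
    (h₂ : Filter.Tendsto (fun u => Real.log (F₂ u) / u ^ p₂) atTop (𝓝 (-L₂))) :
    Filter.Tendsto (fun u => Real.log (P u) / u ^ (p₁ * p₂ / (p₁ + p₂))) atTop (𝓝 (-B)) := by
  have hA0 : 0 < A := A_pos hL₁ hL₂ hp₁ hp₂ hA
  have hB0 : 0 < B := B_pos hL₁ hL₂ hp₁ hp₂ hA hB
  have hs : 0 < p₁ + p₂ := by linarith
  have hq : 0 < p₁ * p₂ / (p₁ + p₂) := by positivity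
  rw [tendsto_order]
  constructor
  · -- lower bound
    intro x hx
    have ha_top : Filter.Tendsto (fun u : ℝ => u ^ (p₂ / (p₁ + p₂)) / A) atTop atTop :=
      (tendsto_rpow_atTop (by positivity)).atTop_div_const hA0
    have hb_top : Filter.Tendsto (fun u : ℝ => A * u ^ (p₁ / (p₁ + p₂))) atTop atTop :=
      (tendsto_rpow_atTop (by positivity)).const_mul_atTop hA0
    have hcomp : Filter.Tendsto (fun u : ℝ =>
        Real.log (F₁ (u ^ (p₂ / (p₁ + p₂)) / A)) / (u ^ (p₂ / (p₁ + p₂)) / A) ^ p₁ * A ^ (-p₁) +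
        Real.log (F₂ (A * u ^ (p₁ / (p₁ + p₂)))) / (A * u ^ (p₁ / (p₁ + p₂))) ^ p₂ * A ^ p₂)
        atTop (𝓝 (-L₁ * A ^ (-p₁) + -L₂ * A ^ p₂)) :=
      ((h₁.comp ha_top).mul_const _).add ((h₂.comp hb_top).mul_const _)
    rw [show -L₁ * A ^ (-p₁) + -L₂ * A ^ p₂ = -B by rw [hB]; ring] at hcomp
    filter_upwards [hcomp.eventually (eventually_gt_nhds hx), eventually_gt_atTop (0:ℝ)]
      with u hu hu0
    set aa := u ^ (p₂ / (p₁ + p₂)) / A with haa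
    set bb := A * u ^ (p₁ / (p₁ + p₂)) with hbb
    have haau : 0 < aa := by rw [haa]; positivity
    have hbbu : 0 < bb := by rw [hbb]; positivity
    have hupow : u ^ (p₂ / (p₁ + p₂)) * u ^ (p₁ / (p₁ + p₂)) = u := by
      rw [← Real.rpow_add hu0, show p₂ / (p₁ + p₂) + p₁ / (p₁ + p₂) = 1 by field_simp; ring,
        Real.rpow_one]
    have hab : aa * bb = u := by
      rw [haa, hbb]; field_simp; linear_combination hupow
    have hplow := hPlow aa bb haau hbbu
    rw [hab] at hplow
    have hPpos : 0 < P u := lt_of_lt_of_le (mul_pos (hF₁pos _) (hF₂pos _)) hplow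
    have hlog : Real.log (F₁ aa) + Real.log (F₂ bb) ≤ Real.log (P u) := by
      rw [← Real.log_mul (hF₁pos _).ne' (hF₂pos _).ne']
      exact Real.log_le_log (mul_pos (hF₁pos _) (hF₂pos _)) hplow
    have huq : (0:ℝ) < u ^ (p₁ * p₂ / (p₁ + p₂)) := Real.rpow_pos_of_pos hu0 _
    have ea : aa ^ p₁ = u ^ (p₁ * p₂ / (p₁ + p₂)) * A ^ (-p₁) := by
      rw [haa, Real.div_rpow (Real.rpow_nonneg hu0.le _) hA0.le, ← Real.rpow_mul hu0.le,
        show p₂ / (p₁ + p₂) * p₁ = p₁ * p₂ / (p₁ + p₂) by ring, Real.rpow_neg hA0.le,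
        div_eq_mul_inv]
    have eb : bb ^ p₂ = u ^ (p₁ * p₂ / (p₁ + p₂)) * A ^ p₂ := by
      rw [hbb, Real.mul_rpow hA0.le (Real.rpow_nonneg hu0.le _), ← Real.rpow_mul hu0.le,
        show p₁ / (p₁ + p₂) * p₂ = p₁ * p₂ / (p₁ + p₂) by ring, mul_comm]
    have hAn1 : (A:ℝ) ^ (-p₁) ≠ 0 := (Real.rpow_pos_of_pos hA0 _).ne'
    have hAn2 : (A:ℝ) ^ p₂ ≠ 0 := (Real.rpow_pos_of_pos hA0 _).ne'
    have hrw : Real.log (F₁ aa) / aa ^ p₁ * A ^ (-p₁) + Real.log (F₂ bb) / bb ^ p₂ * A ^ p₂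
        = (Real.log (F₁ aa) + Real.log (F₂ bb)) / u ^ (p₁ * p₂ / (p₁ + p₂)) := by
      rw [ea, eb]
      field_simp
    rw [hrw] at hu
    calc x < (Real.log (F₁ aa) + Real.log (F₂ bb)) / u ^ (p₁ * p₂ / (p₁ + p₂)) := hu
    _ ≤ Real.log (P u) / u ^ (p₁ * p₂ / (p₁ + p₂)) := by gcongr
  · -- upper bound
    intro b' hb'
    set ε := b' + B with hεdef
    have hε : 0 < ε := by simp [hεdef]; linarith
    set c₀ : ℝ := (L₂ / (B + 1)) ^ (1 / p₂) with hc₀def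
    have hc₀ : 0 < c₀ := Real.rpow_pos_of_pos (by positivity) _
    have hc₀pow : c₀ ^ p₂ = L₂ / (B + 1) := by
      rw [hc₀def, ← Real.rpow_mul (by positivity), one_div,
        inv_mul_cancel₀ hp₂.ne', Real.rpow_one]
    have hc₀inv : c₀ ^ (-p₂) = (B + 1) / L₂ := by
      rw [Real.rpow_neg hc₀.le, hc₀pow, inv_div]
    have hc₀key : L₂ * c₀ ^ (-p₂) = B + 1 := by
      rw [hc₀inv]; field_simp
    set st : ℝ := ε / (8 * L₁) with hstdef
    have hst : 0 < st := by rw [hstdef]; positivity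
    set s₀ : ℝ := c₀ ^ p₁ with hs₀def
    have hs₀ : 0 < s₀ := Real.rpow_pos_of_pos hc₀ _
    set n : ℕ := ⌈(B + 1) / L₁ / st⌉₊ with hndef
    have hnst : (B + 1) / L₁ ≤ n * st := by
      have := Nat.le_ceil ((B + 1) / L₁ / st)
      rw [div_le_iff₀ hst] at this
      exact this
    set c : ℕ → ℝ := fun k => (s₀ + k * st) ^ (1 / p₁) with hcdef
    have hbase : ∀ k : ℕ, 0 < s₀ + k * st := by
      intro k; have : (0:ℝ) ≤ k * st := by positivity
      linarith
    have hck : ∀ k, 0 < c k := fun k => Real.rpow_pos_of_pos (hbase k) _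
    have hckp : ∀ k, (c k) ^ p₁ = s₀ + k * st := by
      intro k
      simp only [hcdef]
      rw [← Real.rpow_mul (hbase k).le, one_div, inv_mul_cancel₀ hp₁.ne', Real.rpow_one]
    have hc0 : c 0 = c₀ := by
      simp only [hcdef]
      rw [Nat.cast_zero, zero_mul, add_zero, hs₀def, ← Real.rpow_mul hc₀.le,
        mul_one_div, div_self hp₁.ne', Real.rpow_one]
    have cmono : ∀ j k : ℕ, j ≤ k → c j ≤ c k := by
      intro j k hjk
      simp only [hcdef]
      apply Real.rpow_le_rpow (hbase j).le _ (by positivity)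
      have : (j:ℝ) ≤ k := Nat.cast_le.2 hjk
      nlinarith
    clear_value ε c₀ st s₀ n c
    have hcneg : ∀ k, (c k) ^ (-p₂) ≤ (B + 1) / L₂ := by
      intro k
      rw [← hc₀inv, ← hc0]
      exact Real.rpow_le_rpow_of_nonpos (hck 0) (cmono 0 k (Nat.zero_le k)) (by linarith)
    have hcnegpos : ∀ k, 0 < (c k) ^ (-p₂) := fun k => Real.rpow_pos_of_pos (hck k) _
    set M : ℝ := (s₀ + n * st) + (B + 1) / L₂ with hMdef
    have hM : 0 < M := by rw [hMdef]; positivity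
    set δ : ℝ := min (ε / (8 * M)) (1 / (2 * M)) with hδdef
    have hδ : 0 < δ := lt_min (by positivity) (by positivity)
    have hδM1 : δ * M ≤ ε / 8 := by
      have h := min_le_left (ε / (8 * M)) (1 / (2 * M))
      rw [hδdef]
      calc min (ε / (8 * M)) (1 / (2 * M)) * M ≤ ε / (8 * M) * M :=
        mul_le_mul_of_nonneg_right h hM.le
      _ = ε / 8 := by field_simp
    have hδM2 : δ * M ≤ 1 / 2 := by
      have h := min_le_right (ε / (8 * M)) (1 / (2 * M))
      rw [hδdef]
      calc min (ε / (8 * M)) (1 / (2 * M)) * M ≤ 1 / (2 * M) * M :=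
        mul_le_mul_of_nonneg_right h hM.le
      _ = 1 / 2 := by
        rw [one_div, mul_inv, mul_assoc, inv_mul_cancel₀ hM.ne', mul_one, one_div]
    clear_value M δ
    -- exponent bounds
    have hsM : ∀ k : ℕ, k ≤ n → s₀ + k * st ≤ M := by
      intro k hk
      rw [hMdef]
      have h1 : (k:ℝ) * st ≤ n * st := by
        have : (k:ℝ) ≤ n := Nat.cast_le.2 hk
        nlinarith
      have h2 : (0:ℝ) < (B + 1) / L₂ := by positivity
      linarith
    have Emid : ∀ k : ℕ, k < n →
        (-L₁ + δ) * (s₀ + k * st) + (-L₂ + δ) * (c (k + 1)) ^ (-p₂) ≤ -B + ε / 4 := by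
      intro k hk
      have hkey := key_ineq hL₁ hL₂ hp₁ hp₂ hA hB (c (k + 1)) (hck _)
      rw [hckp (k + 1)] at hkey
      have hcast : ((k + 1 : ℕ) : ℝ) = (k : ℝ) + 1 := by push_cast; ring
      rw [hcast] at hkey
      have hMb : (s₀ + k * st) + (c (k + 1)) ^ (-p₂) ≤ M := by
        have := hcneg (k + 1)
        have := hsM k hk.le
        rw [hMdef]
        have h1 : (k:ℝ) * st ≤ n * st := by
          have : (k:ℝ) ≤ n := Nat.cast_le.2 hk.le
          nlinarith
        linarith [hcneg (k + 1)]
      have hδb : δ * ((s₀ + k * st) + (c (k + 1)) ^ (-p₂)) ≤ ε / 8 := by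
        calc δ * ((s₀ + k * st) + (c (k + 1)) ^ (-p₂)) ≤ δ * M :=
          mul_le_mul_of_nonneg_left hMb hδ.le
        _ ≤ ε / 8 := hδM1
      have hstL : L₁ * st = ε / 8 := by
        rw [hstdef]; field_simp
      nlinarith [hbase k, hcnegpos (k + 1)]
    have Ebot : (-L₂ + δ) * c₀ ^ (-p₂) ≤ -B + ε / 4 := by
      have h1 : δ * (c₀ ^ (-p₂)) ≤ 1 / 2 := by
        have hle : c₀ ^ (-p₂) ≤ M := by rw [hMdef, hc₀inv]; nlinarith [hbase n]
        calc δ * (c₀ ^ (-p₂)) ≤ δ * M := mul_le_mul_of_nonneg_left hle hδ.le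
        _ ≤ 1 / 2 := hδM2
      nlinarith [hc₀key]
    have Etop : (-L₁ + δ) * (s₀ + n * st) ≤ -B + ε / 4 := by
      have h1 : δ * (s₀ + n * st) ≤ 1 / 2 := by
        have hle : s₀ + n * st ≤ M := hsM n le_rfl
        calc δ * (s₀ + n * st) ≤ δ * M := mul_le_mul_of_nonneg_left hle hδ.le
        _ ≤ 1 / 2 := hδM2
      have h2 : B + 1 ≤ L₁ * (s₀ + n * st) := by
        have := hnst
        have h3 : L₁ * ((B + 1) / L₁) = B + 1 := by field_simp
        nlinarith
      nlinarith
    -- eventual log bounds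
    obtain ⟨U₁, hU₁⟩ := eventually_atTop.1 (log_ev_le hp₁ h₁ hδ)
    obtain ⟨U₂, hU₂⟩ := eventually_atTop.1 (log_ev_le hp₂ h₂ hδ)
    have ev1 : ∀ᶠ u : ℝ in atTop, U₁ ≤ c₀ * u ^ (p₂ / (p₁ + p₂)) :=
      ((tendsto_rpow_atTop (by positivity)).const_mul_atTop hc₀).eventually_ge_atTop U₁
    have ev2 : ∀ᶠ u : ℝ in atTop, U₂ ≤ u ^ (p₁ / (p₁ + p₂)) / c n :=
      ((tendsto_rpow_atTop (by positivity)).atTop_div_const (hck n)).eventually_ge_atTop U₂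
    have ev3 : ∀ᶠ u : ℝ in atTop,
        Real.log ((n:ℝ) + 2) / u ^ (p₁ * p₂ / (p₁ + p₂)) ≤ ε / 4 :=
      (tendsto_const_nhds.div_atTop (tendsto_rpow_atTop hq)).eventually
        (eventually_le_nhds (by positivity))
    filter_upwards [ev1, ev2, ev3, eventually_gt_atTop (0:ℝ)] with u he1 he2 he3 hu0
    have huq : (0:ℝ) < u ^ (p₁ * p₂ / (p₁ + p₂)) := Real.rpow_pos_of_pos hu0 _
    have huw2 : (0:ℝ) < u ^ (p₂ / (p₁ + p₂)) := Real.rpow_pos_of_pos hu0 _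
    have huw1 : (0:ℝ) < u ^ (p₁ / (p₁ + p₂)) := Real.rpow_pos_of_pos hu0 _
    set X : ℕ → ℝ := fun k => c k * u ^ (p₂ / (p₁ + p₂)) with hXdef
    clear_value X
    have hXpos : ∀ k, 0 < X k := by
      intro k; simp only [hXdef]; exact mul_pos (hck k) huw2
    have hup := hPup u hu0 n X (hXpos 0)
    -- argument bounds
    have hXarg : ∀ k : ℕ, U₁ ≤ X k := by
      intro k
      calc U₁ ≤ c₀ * u ^ (p₂ / (p₁ + p₂)) := he1
      _ ≤ c k * u ^ (p₂ / (p₁ + p₂)) := by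
          rw [← hc0]
          exact mul_le_mul_of_nonneg_right (cmono 0 k (Nat.zero_le k)) huw2.le
      _ = X k := by simp only [hXdef]
    have hZeq : ∀ k : ℕ, u / X k = u ^ (p₁ / (p₁ + p₂)) / c k := by
      intro k
      have hu' : u = u ^ (p₁ / (p₁ + p₂)) * u ^ (p₂ / (p₁ + p₂)) := by
        rw [← Real.rpow_add hu0, show p₁ / (p₁ + p₂) + p₂ / (p₁ + p₂) = 1 by
          field_simp, Real.rpow_one]
      simp only [hXdef]
      nth_rewrite 1 [hu']
      rw [mul_div_mul_right _ _ huw2.ne']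
    have hZarg : ∀ k : ℕ, k ≤ n → U₂ ≤ u / X k := by
      intro k hk
      rw [hZeq k]
      calc U₂ ≤ u ^ (p₁ / (p₁ + p₂)) / c n := he2
      _ ≤ u ^ (p₁ / (p₁ + p₂)) / c k :=
        div_le_div_of_nonneg_left huw1.le (hck k) (cmono k n hk)
    have hXp : ∀ k : ℕ, (X k) ^ p₁ = (s₀ + k * st) * u ^ (p₁ * p₂ / (p₁ + p₂)) := by
      intro k
      simp only [hXdef]
      rw [Real.mul_rpow (hck k).le huw2.le, ← Real.rpow_mul hu0.le,
        show p₂ / (p₁ + p₂) * p₁ = p₁ * p₂ / (p₁ + p₂) by ring, hckp k]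
    have hZp : ∀ k : ℕ, (u / X k) ^ p₂ = (c k) ^ (-p₂) * u ^ (p₁ * p₂ / (p₁ + p₂)) := by
      intro k
      rw [hZeq k, Real.div_rpow huw1.le (hck k).le, ← Real.rpow_mul hu0.le,
        show p₁ / (p₁ + p₂) * p₂ = p₁ * p₂ / (p₁ + p₂) by ring, div_eq_mul_inv,
        ← Real.rpow_neg (hck k).le, mul_comm]
    set E : ℝ := Real.exp ((-B + ε / 4) * u ^ (p₁ * p₂ / (p₁ + p₂))) with hEdef
    clear_value E
    have hE : 0 < E := by rw [hEdef]; exact Real.exp_pos _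
    -- individual bounds
    have Tbot : F₂ (u / X 0) ≤ E := by
      have hl := hU₂ (u / X 0) (hZarg 0 (Nat.zero_le n))
      have : Real.log (F₂ (u / X 0)) ≤ (-B + ε / 4) * u ^ (p₁ * p₂ / (p₁ + p₂)) := by
        calc Real.log (F₂ (u / X 0)) ≤ (-L₂ + δ) * (u / X 0) ^ p₂ := hl
        _ = (-L₂ + δ) * c₀ ^ (-p₂) * u ^ (p₁ * p₂ / (p₁ + p₂)) := by
            rw [hZp 0, hc0]; ring
        _ ≤ (-B + ε / 4) * u ^ (p₁ * p₂ / (p₁ + p₂)) :=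
            mul_le_mul_of_nonneg_right Ebot huq.le
      calc F₂ (u / X 0) = Real.exp (Real.log (F₂ (u / X 0))) := (Real.exp_log (hF₂pos _)).symm
      _ ≤ E := by rw [hEdef]; exact Real.exp_le_exp.2 this
    have Ttop : F₁ (X n) ≤ E := by
      have hl := hU₁ (X n) (hXarg n)
      have : Real.log (F₁ (X n)) ≤ (-B + ε / 4) * u ^ (p₁ * p₂ / (p₁ + p₂)) := by
        calc Real.log (F₁ (X n)) ≤ (-L₁ + δ) * (X n) ^ p₁ := hl
        _ = (-L₁ + δ) * (s₀ + n * st) * u ^ (p₁ * p₂ / (p₁ + p₂)) := by rw [hXp n]; ring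
        _ ≤ (-B + ε / 4) * u ^ (p₁ * p₂ / (p₁ + p₂)) :=
            mul_le_mul_of_nonneg_right Etop huq.le
      calc F₁ (X n) = Real.exp (Real.log (F₁ (X n))) := (Real.exp_log (hF₁pos _)).symm
      _ ≤ E := by rw [hEdef]; exact Real.exp_le_exp.2 this
    have Tmid : ∀ k ∈ Finset.range n, F₁ (X k) * F₂ (u / X (k + 1)) ≤ E := by
      intro k hk
      rw [Finset.mem_range] at hk
      have hl1 := hU₁ (X k) (hXarg k)
      have hl2 := hU₂ (u / X (k + 1)) (hZarg (k + 1) hk)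
      have hsum : Real.log (F₁ (X k)) + Real.log (F₂ (u / X (k + 1)))
          ≤ (-B + ε / 4) * u ^ (p₁ * p₂ / (p₁ + p₂)) := by
        calc Real.log (F₁ (X k)) + Real.log (F₂ (u / X (k + 1)))
            ≤ (-L₁ + δ) * (X k) ^ p₁ + (-L₂ + δ) * (u / X (k + 1)) ^ p₂ :=
              add_le_add hl1 hl2
        _ = ((-L₁ + δ) * (s₀ + k * st) + (-L₂ + δ) * (c (k + 1)) ^ (-p₂))
              * u ^ (p₁ * p₂ / (p₁ + p₂)) := by rw [hXp k, hZp (k + 1)]; ring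
        _ ≤ (-B + ε / 4) * u ^ (p₁ * p₂ / (p₁ + p₂)) :=
              mul_le_mul_of_nonneg_right (Emid k hk) huq.le
      calc F₁ (X k) * F₂ (u / X (k + 1))
          = Real.exp (Real.log (F₁ (X k)) + Real.log (F₂ (u / X (k + 1)))) := by
            rw [Real.exp_add, Real.exp_log (hF₁pos _), Real.exp_log (hF₂pos _)]
      _ ≤ E := by rw [hEdef]; exact Real.exp_le_exp.2 hsum
    have hsumle : ∑ k ∈ Finset.range n, F₁ (X k) * F₂ (u / X (k + 1)) ≤ n * E := by
      have := Finset.sum_le_card_nsmul (Finset.range n) _ E Tmid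
      rwa [Finset.card_range, nsmul_eq_mul] at this
    have htot : P u ≤ ((n:ℝ) + 2) * E := by
      calc P u ≤ F₂ (u / X 0) + F₁ (X n) + ∑ k ∈ Finset.range n, F₁ (X k) * F₂ (u / X (k+1)) :=
        hup
      _ ≤ E + E + n * E := by
          have := Tbot; have := Ttop
          gcongr
      _ = ((n:ℝ) + 2) * E := by ring
    -- positivity of P u
    have hPpos : 0 < P u := by
      have haau : 0 < u ^ (p₂ / (p₁ + p₂)) / A := by positivity
      have hbbu : 0 < A * u ^ (p₁ / (p₁ + p₂)) := by positivity
      have hplow := hPlow _ _ haau hbbu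
      have hupow : u ^ (p₂ / (p₁ + p₂)) * u ^ (p₁ / (p₁ + p₂)) = u := by
        rw [← Real.rpow_add hu0, show p₂ / (p₁ + p₂) + p₁ / (p₁ + p₂) = 1 by
          field_simp; ring, Real.rpow_one]
      have hab : u ^ (p₂ / (p₁ + p₂)) / A * (A * u ^ (p₁ / (p₁ + p₂))) = u := by
        field_simp
        linear_combination hupow
      rw [hab] at hplow
      exact lt_of_lt_of_le (mul_pos (hF₁pos _) (hF₂pos _)) hplow
    have hlogP : Real.log (P u) ≤ Real.log ((n:ℝ) + 2)
        + (-B + ε / 4) * u ^ (p₁ * p₂ / (p₁ + p₂)) := by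
      calc Real.log (P u) ≤ Real.log (((n:ℝ) + 2) * E) := Real.log_le_log hPpos htot
      _ = Real.log ((n:ℝ) + 2) + (-B + ε / 4) * u ^ (p₁ * p₂ / (p₁ + p₂)) := by
          rw [Real.log_mul (by positivity) hE.ne', hEdef, Real.log_exp]
    calc Real.log (P u) / u ^ (p₁ * p₂ / (p₁ + p₂))
        ≤ (Real.log ((n:ℝ) + 2) + (-B + ε / 4) * u ^ (p₁ * p₂ / (p₁ + p₂)))
          / u ^ (p₁ * p₂ / (p₁ + p₂)) := by gcongr
    _ = Real.log ((n:ℝ) + 2) / u ^ (p₁ * p₂ / (p₁ + p₂)) + (-B + ε / 4) := by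
        rw [add_div, mul_div_cancel_right₀ _ huq.ne']
    _ ≤ ε / 4 + (-B + ε / 4) := by linarith [he3]
    _ < b' := by rw [hεdef]; linarith

open MeasureTheory ProbabilityTheory in
theorem logWeibullian_product
    {Ω : Type*} [MeasureSpace Ω] [IsProbabilityMeasure (ℙ : Measure Ω)]
    (Y₁ Y₂ : Ω → ℝ) (hY₁ : Measurable Y₁) (hY₂ : Measurable Y₂)
    (hindep : IndepFun Y₁ Y₂)
    (hY₁pos : ∀ᵐ ω ∂ℙ, 0 < Y₁ ω) (hY₂pos : ∀ᵐ ω ∂ℙ, 0 < Y₂ ω)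
    (L₁ L₂ p₁ p₂ : ℝ) (hL₁ : 0 < L₁) (hL₂ : 0 < L₂) (hp₁ : 0 < p₁) (hp₂ : 0 < p₂)
    (h₁ : Tendsto (fun u => Real.log (ℙ {ω | Y₁ ω > u}).toReal / u ^ p₁) atTop (𝓝 (-L₁)))
    (h₂ : Tendsto (fun u => Real.log (ℙ {ω | Y₂ ω > u}).toReal / u ^ p₂) atTop (𝓝 (-L₂)))
    (A B : ℝ) (hA : A = ((p₁ * L₁) / (p₂ * L₂)) ^ (1 / (p₁ + p₂)))
    (hB : B = L₁ * A ^ (-p₁) + L₂ * A ^ p₂) :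
    Tendsto (fun u => Real.log (ℙ {ω | Y₁ ω * Y₂ ω > u}).toReal /
        u ^ (p₁ * p₂ / (p₁ + p₂))) atTop (𝓝 (-B)) := by
  have hmono₁ : ∀ ⦃u v : ℝ⦄, u ≤ v → (ℙ {ω | Y₁ ω > v}).toReal ≤ (ℙ {ω | Y₁ ω > u}).toReal := by
    intro u v huv
    exact ENNReal.toReal_mono (measure_ne_top _ _)
      (measure_mono (fun ω h => lt_of_le_of_lt huv h))
  have hmono₂ : ∀ ⦃u v : ℝ⦄, u ≤ v → (ℙ {ω | Y₂ ω > v}).toReal ≤ (ℙ {ω | Y₂ ω > u}).toReal := by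
    intro u v huv
    exact ENNReal.toReal_mono (measure_ne_top _ _)
      (measure_mono (fun ω h => lt_of_le_of_lt huv h))
  have hF₁pos : ∀ u : ℝ, 0 < (ℙ {ω | Y₁ ω > u}).toReal :=
    surv_pos hL₁ (fun u => ENNReal.toReal_nonneg) hmono₁ h₁
  have hF₂pos : ∀ u : ℝ, 0 < (ℙ {ω | Y₂ ω > u}).toReal :=
    surv_pos hL₂ (fun u => ENNReal.toReal_nonneg) hmono₂ h₂
  have hmul : ∀ a b : ℝ, ℙ ({ω | Y₁ ω > a} ∩ {ω | Y₂ ω > b})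
      = ℙ {ω | Y₁ ω > a} * ℙ {ω | Y₂ ω > b} := by
    intro a b
    exact (indepFun_iff_measure_inter_preimage_eq_mul.mp hindep)
      (Set.Ioi a) (Set.Ioi b) measurableSet_Ioi measurableSet_Ioi
  have hPlow : ∀ a b : ℝ, 0 < a → 0 < b →
      (ℙ {ω | Y₁ ω > a}).toReal * (ℙ {ω | Y₂ ω > b}).toReal
        ≤ (ℙ {ω | Y₁ ω * Y₂ ω > a * b}).toReal := by
    intro a b ha hb
    rw [← ENNReal.toReal_mul, ← hmul a b]
    refine ENNReal.toReal_mono (measure_ne_top _ _) (measure_mono ?_)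
    rintro ω ⟨h1, h2⟩
    exact mul_lt_mul'' h1 h2 ha.le hb.le
  have hPup : ∀ u : ℝ, 0 < u → ∀ (n : ℕ) (X : ℕ → ℝ), 0 < X 0 →
      (ℙ {ω | Y₁ ω * Y₂ ω > u}).toReal ≤ (ℙ {ω | Y₂ ω > u / X 0}).toReal
        + (ℙ {ω | Y₁ ω > X n}).toReal
        + ∑ k ∈ Finset.range n,
            (ℙ {ω | Y₁ ω > X k}).toReal * (ℙ {ω | Y₂ ω > u / X (k+1)}).toReal := by
    intro u hu0 n X hX0
    have hcover : {ω | Y₁ ω * Y₂ ω > u} ≤ᵐ[ℙ] (({ω | Y₂ ω > u / X 0} ∪ {ω | Y₁ ω > X n}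
        ∪ ⋃ k ∈ Finset.range n, ({ω | Y₁ ω > X k} ∩ {ω | Y₂ ω > u / X (k+1)})) : Set Ω) := by
      filter_upwards [hY₁pos] with ω hωpos hmem
      have hmem' : u < Y₁ ω * Y₂ ω := hmem
      have hY₂big : ∀ z : ℝ, 0 < z → Y₁ ω ≤ z → u / z < Y₂ ω := by
        intro z hz hle
        have h2 : u / Y₁ ω < Y₂ ω := (div_lt_iff₀ hωpos).2 (by rw [mul_comm] at hmem'; exact hmem')
        have h3 : u / z ≤ u / Y₁ ω := div_le_div_of_nonneg_left hu0.le hωpos hle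
        linarith
      by_cases htop : X n < Y₁ ω
      · exact Or.inl (Or.inr htop)
      by_cases hbot : Y₁ ω ≤ X 0
      · exact Or.inl (Or.inl (hY₂big (X 0) hX0 hbot))
      · obtain ⟨k, hk, hk1, hk2⟩ := exists_step_aux X (Y₁ ω) n (not_le.1 hbot) (not_lt.1 htop)
        have hXk1 : 0 < X (k + 1) := lt_of_lt_of_le hωpos hk2
        refine Or.inr (Set.mem_biUnion (Finset.mem_range.2 hk) ⟨hk1, ?_⟩)
        exact hY₂big (X (k + 1)) hXk1 hk2
    have hmeas : ℙ {ω | Y₁ ω * Y₂ ω > u} ≤ ℙ {ω | Y₂ ω > u / X 0} + ℙ {ω | Y₁ ω > X n}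
        + ∑ k ∈ Finset.range n, ℙ ({ω | Y₁ ω > X k} ∩ {ω | Y₂ ω > u / X (k+1)}) := by
      calc ℙ {ω | Y₁ ω * Y₂ ω > u} ≤ ℙ ({ω | Y₂ ω > u / X 0} ∪ {ω | Y₁ ω > X n}
          ∪ ⋃ k ∈ Finset.range n, ({ω | Y₁ ω > X k} ∩ {ω | Y₂ ω > u / X (k+1)})) :=
        measure_mono_ae hcover
      _ ≤ ℙ ({ω | Y₂ ω > u / X 0} ∪ {ω | Y₁ ω > X n})
          + ℙ (⋃ k ∈ Finset.range n, ({ω | Y₁ ω > X k} ∩ {ω | Y₂ ω > u / X (k+1)})) :=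
        measure_union_le _ _
      _ ≤ (ℙ {ω | Y₂ ω > u / X 0} + ℙ {ω | Y₁ ω > X n})
          + ∑ k ∈ Finset.range n, ℙ ({ω | Y₁ ω > X k} ∩ {ω | Y₂ ω > u / X (k+1)}) := by
        gcongr
        · exact measure_union_le _ _
        · exact measure_biUnion_finset_le _ _
    have hfin : ℙ {ω | Y₂ ω > u / X 0} + ℙ {ω | Y₁ ω > X n}
        + ∑ k ∈ Finset.range n, ℙ ({ω | Y₁ ω > X k} ∩ {ω | Y₂ ω > u / X (k+1)}) ≠ ⊤ := by
      refine ENNReal.add_ne_top.2 ⟨ENNReal.add_ne_top.2 ⟨measure_ne_top _ _, measure_ne_top _ _⟩, ?_⟩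
      exact (ENNReal.sum_lt_top.2 fun k _ => (measure_lt_top _ _)).ne
    calc (ℙ {ω | Y₁ ω * Y₂ ω > u}).toReal
        ≤ (ℙ {ω | Y₂ ω > u / X 0} + ℙ {ω | Y₁ ω > X n}
          + ∑ k ∈ Finset.range n, ℙ ({ω | Y₁ ω > X k} ∩ {ω | Y₂ ω > u / X (k+1)})).toReal :=
        ENNReal.toReal_mono hfin hmeas
    _ = (ℙ {ω | Y₂ ω > u / X 0}).toReal + (ℙ {ω | Y₁ ω > X n}).toReal
          + ∑ k ∈ Finset.range n,
            (ℙ {ω | Y₁ ω > X k}).toReal * (ℙ {ω | Y₂ ω > u / X (k+1)}).toReal := by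
        rw [ENNReal.toReal_add (ENNReal.add_ne_top.2 ⟨measure_ne_top _ _, measure_ne_top _ _⟩)
            ((ENNReal.sum_lt_top.2 fun k _ => (measure_lt_top _ _)).ne),
          ENNReal.toReal_add (measure_ne_top _ _) (measure_ne_top _ _),
          ENNReal.toReal_sum (fun k _ => measure_ne_top _ _)]
        congr 1
        refine Finset.sum_congr rfl fun k _ => ?_
        rw [hmul, ENNReal.toReal_mul]
  exact analytic_main hL₁ hL₂ hp₁ hp₂ hA hB hF₁pos hF₂pos hPlow hPup h₁ h₂
end

section
/- Let Y1, Y2 be independent positive random variables with log-Weibullian tails log P(Y_i > u)/u^{p_i} → -L_i (i = 1, 2). Then liminf_{u→∞} log P(Y1Y2 > u)/u^{p1p2/(p1+p2)} ≥ -(L1 ((p2L2)/(p1L1))^{p1/(p1+p2)} + L2 ((p1L1)/(p2L2))^{p2/(p1+p2)}). -/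
open MeasureTheory ProbabilityTheory Filter Topology Real

/-- Auxiliary: composing the log-tail limit with `u ↦ c * u ^ t`. -/
lemma logWeib_aux {Ω : Type*} [MeasureSpace Ω]
    (Y : Ω → ℝ) (L p t c r : ℝ) (hp : 0 < p) (ht : 0 < t) (hc : 0 < c)
    (hr : t * p = r)
    (h : Tendsto (fun u => Real.log (ℙ {ω | Y ω > u}).toReal / u ^ p) atTop (𝓝 (-L))) :
    Tendsto (fun u => Real.log (ℙ {ω | Y ω > c * u ^ t}).toReal / u ^ r) atTop
      (𝓝 (-(L * c ^ p))) := by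
  have hcomp : Tendsto (fun u : ℝ => c * u ^ t) atTop atTop :=
    (tendsto_rpow_atTop ht).const_mul_atTop hc
  have h1 : Tendsto (fun u : ℝ =>
      Real.log (ℙ {ω | Y ω > c * u ^ t}).toReal / (c * u ^ t) ^ p * c ^ p) atTop
      (𝓝 (-L * c ^ p)) := by
    exact ((h.comp hcomp).mul_const _)
  have heq : ∀ᶠ u in (atTop : Filter ℝ),
      Real.log (ℙ {ω | Y ω > c * u ^ t}).toReal / (c * u ^ t) ^ p * c ^ p
        = Real.log (ℙ {ω | Y ω > c * u ^ t}).toReal / u ^ r := by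
    filter_upwards [eventually_gt_atTop (0 : ℝ)] with u hu
    have hut : (0:ℝ) ≤ u ^ t := Real.rpow_nonneg hu.le t
    have hpow : (c * u ^ t) ^ p = c ^ p * u ^ r := by
      rw [Real.mul_rpow hc.le hut, ← Real.rpow_mul hu.le, hr]
    rw [hpow]
    have hcp : c ^ p ≠ 0 := (Real.rpow_pos_of_pos hc p).ne'
    field_simp
  have := h1.congr' heq
  simpa [neg_mul] using this

theorem logWeibullian_product_liminf_lower_bound
    {Ω : Type*} [MeasureSpace Ω] [IsProbabilityMeasure (ℙ : Measure Ω)]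
    (Y₁ Y₂ : Ω → ℝ) (hY₁ : Measurable Y₁) (hY₂ : Measurable Y₂)
    (hindep : IndepFun Y₁ Y₂)
    (hY₁pos : ∀ᵐ ω ∂ℙ, 0 < Y₁ ω) (hY₂pos : ∀ᵐ ω ∂ℙ, 0 < Y₂ ω)
    (L₁ L₂ p₁ p₂ : ℝ) (hL₁ : 0 < L₁) (hL₂ : 0 < L₂) (hp₁ : 0 < p₁) (hp₂ : 0 < p₂)
    (h₁ : Tendsto (fun u => Real.log (ℙ {ω | Y₁ ω > u}).toReal / u ^ p₁) atTop (𝓝 (-L₁)))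
    (h₂ : Tendsto (fun u => Real.log (ℙ {ω | Y₂ ω > u}).toReal / u ^ p₂) atTop (𝓝 (-L₂))) :
    -(L₁ * ((p₂ * L₂) / (p₁ * L₁)) ^ (p₁ / (p₁ + p₂)) +
        L₂ * ((p₁ * L₁) / (p₂ * L₂)) ^ (p₂ / (p₁ + p₂))) ≤
      Filter.liminf (fun u => Real.log (ℙ {ω | Y₁ ω * Y₂ ω > u}).toReal /
        u ^ (p₁ * p₂ / (p₁ + p₂))) atTop := by
  have hs : (0:ℝ) < p₁ + p₂ := by linarith
  set r : ℝ := p₁ * p₂ / (p₁ + p₂) with hr_def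
  set t₁ : ℝ := p₂ / (p₁ + p₂) with ht₁_def
  set t₂ : ℝ := p₁ / (p₁ + p₂) with ht₂_def
  have ht₁ : 0 < t₁ := div_pos hp₂ hs
  have ht₂ : 0 < t₂ := div_pos hp₁ hs
  have ht₁p : t₁ * p₁ = r := by rw [ht₁_def, hr_def]; ring
  have ht₂p : t₂ * p₂ = r := by rw [ht₂_def, hr_def]; ring
  have ht₁₂ : t₁ + t₂ = 1 := by rw [ht₁_def, ht₂_def, ← add_div, add_comm p₂ p₁, div_self hs.ne']
  set x : ℝ := (p₂ * L₂) / (p₁ * L₁) with hx_def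
  have hx : 0 < x := div_pos (mul_pos hp₂ hL₂) (mul_pos hp₁ hL₁)
  set c₁ : ℝ := x ^ ((p₁ + p₂)⁻¹) with hc₁_def
  set c₂ : ℝ := x⁻¹ ^ ((p₁ + p₂)⁻¹) with hc₂_def
  have hc₁ : 0 < c₁ := Real.rpow_pos_of_pos hx _
  have hc₂ : 0 < c₂ := Real.rpow_pos_of_pos (inv_pos.mpr hx) _
  have hc₁₂ : c₁ * c₂ = 1 := by
    rw [hc₁_def, hc₂_def, ← Real.mul_rpow hx.le (inv_pos.mpr hx).le,
      mul_inv_cancel₀ hx.ne', Real.one_rpow]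
  have hc₁p : c₁ ^ p₁ = x ^ t₂ := by
    rw [hc₁_def, ← Real.rpow_mul hx.le, inv_mul_eq_div, ht₂_def]
  have hc₂p : c₂ ^ p₂ = x⁻¹ ^ t₁ := by
    rw [hc₂_def, ← Real.rpow_mul (inv_pos.mpr hx).le, inv_mul_eq_div, ht₁_def]
  -- the two composed limits
  have H₁ := logWeib_aux Y₁ L₁ p₁ t₁ c₁ r hp₁ ht₁ hc₁ ht₁p h₁
  have H₂ := logWeib_aux Y₂ L₂ p₂ t₂ c₂ r hp₂ ht₂ hc₂ ht₂p h₂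
  set g : ℝ → ℝ := fun u =>
    Real.log (ℙ {ω | Y₁ ω > c₁ * u ^ t₁}).toReal / u ^ r +
    Real.log (ℙ {ω | Y₂ ω > c₂ * u ^ t₂}).toReal / u ^ r with hg_def
  have hg : Tendsto g atTop (𝓝 (-(L₁ * c₁ ^ p₁) + -(L₂ * c₂ ^ p₂))) := H₁.add H₂
  set f : ℝ → ℝ := fun u => Real.log (ℙ {ω | Y₁ ω * Y₂ ω > u}).toReal / u ^ r with hf_def
  -- positivity of the tail probabilities eventually
  have hpos₁ : ∀ᶠ v in (atTop : Filter ℝ), 0 < (ℙ {ω | Y₁ ω > v}).toReal := by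
    have := h₁.eventually (eventually_lt_nhds (show -L₁ < -L₁/2 by linarith))
    filter_upwards [this, eventually_gt_atTop (0:ℝ)] with v hv hv0
    by_contra h
    push_neg at h
    have : (ℙ {ω | Y₁ ω > v}).toReal = 0 := le_antisymm h ENNReal.toReal_nonneg
    rw [this] at hv
    simp at hv
    have : (0:ℝ) < v ^ p₁ := Real.rpow_pos_of_pos hv0 _
    nlinarith
  have hpos₂ : ∀ᶠ v in (atTop : Filter ℝ), 0 < (ℙ {ω | Y₂ ω > v}).toReal := by
    have := h₂.eventually (eventually_lt_nhds (show -L₂ < -L₂/2 by linarith))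
    filter_upwards [this, eventually_gt_atTop (0:ℝ)] with v hv hv0
    by_contra h
    push_neg at h
    have : (ℙ {ω | Y₂ ω > v}).toReal = 0 := le_antisymm h ENNReal.toReal_nonneg
    rw [this] at hv
    simp at hv
    have : (0:ℝ) < v ^ p₂ := Real.rpow_pos_of_pos hv0 _
    nlinarith
  have hcomp₁ : Tendsto (fun u : ℝ => c₁ * u ^ t₁) atTop atTop :=
    (tendsto_rpow_atTop ht₁).const_mul_atTop hc₁
  have hcomp₂ : Tendsto (fun u : ℝ => c₂ * u ^ t₂) atTop atTop :=
    (tendsto_rpow_atTop ht₂).const_mul_atTop hc₂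
  -- the key eventual inequality g ≤ f
  have hbound : ∀ᶠ u in (atTop : Filter ℝ), g u ≤ f u := by
    filter_upwards [hcomp₁.eventually hpos₁, hcomp₂.eventually hpos₂,
      eventually_gt_atTop (0:ℝ)] with u hP₁ hP₂ hu
    have hur : (0:ℝ) < u ^ r := Real.rpow_pos_of_pos hu _
    have ha : (0:ℝ) < c₁ * u ^ t₁ := mul_pos hc₁ (Real.rpow_pos_of_pos hu _)
    have hb : (0:ℝ) < c₂ * u ^ t₂ := mul_pos hc₂ (Real.rpow_pos_of_pos hu _)
    have hab : (c₁ * u ^ t₁) * (c₂ * u ^ t₂) = u := by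
      rw [mul_mul_mul_comm, hc₁₂, one_mul, ← Real.rpow_add hu, ht₁₂, Real.rpow_one]
    -- event inclusion
    have hsub : {ω | Y₁ ω > c₁ * u ^ t₁} ∩ {ω | Y₂ ω > c₂ * u ^ t₂}
        ⊆ {ω | Y₁ ω * Y₂ ω > u} := by
      rintro ω ⟨hω₁, hω₂⟩
      have : (c₁ * u ^ t₁) * (c₂ * u ^ t₂) < Y₁ ω * Y₂ ω :=
        mul_lt_mul'' hω₁ hω₂ ha.le hb.le
      rw [hab] at this
      exact this
    have hindep' : ℙ ({ω | Y₁ ω > c₁ * u ^ t₁} ∩ {ω | Y₂ ω > c₂ * u ^ t₂})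
        = ℙ {ω | Y₁ ω > c₁ * u ^ t₁} * ℙ {ω | Y₂ ω > c₂ * u ^ t₂} := by
      have := hindep.measure_inter_preimage_eq_mul (Set.Ioi (c₁ * u ^ t₁))
        (Set.Ioi (c₂ * u ^ t₂)) measurableSet_Ioi measurableSet_Ioi
      simpa [Set.preimage, Set.Ioi] using this
    have hle : (ℙ {ω | Y₁ ω > c₁ * u ^ t₁}).toReal * (ℙ {ω | Y₂ ω > c₂ * u ^ t₂}).toReal
        ≤ (ℙ {ω | Y₁ ω * Y₂ ω > u}).toReal := by
      rw [← ENNReal.toReal_mul, ← hindep']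
      exact ENNReal.toReal_mono (measure_ne_top _ _) (measure_mono hsub)
    have hlog : Real.log (ℙ {ω | Y₁ ω > c₁ * u ^ t₁}).toReal +
        Real.log (ℙ {ω | Y₂ ω > c₂ * u ^ t₂}).toReal
        ≤ Real.log (ℙ {ω | Y₁ ω * Y₂ ω > u}).toReal := by
      rw [← Real.log_mul hP₁.ne' hP₂.ne']
      exact Real.log_le_log (mul_pos hP₁ hP₂) hle
    have : g u = (Real.log (ℙ {ω | Y₁ ω > c₁ * u ^ t₁}).toReal +
        Real.log (ℙ {ω | Y₂ ω > c₂ * u ^ t₂}).toReal) / u ^ r := by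
      rw [hg_def]; ring
    rw [this, hf_def]
    exact div_le_div_of_nonneg_right hlog hur.le |>.trans_eq rfl
  -- conclude via liminf comparison
  have hgb : IsBoundedUnder (· ≥ ·) (atTop : Filter ℝ) g := hg.isBoundedUnder_ge
  have hfcb : IsCoboundedUnder (· ≥ ·) (atTop : Filter ℝ) f := by
    apply Filter.IsBoundedUnder.isCoboundedUnder_ge
    refine ⟨0, ?_⟩
    rw [eventually_map]
    filter_upwards [eventually_ge_atTop (1:ℝ)] with u hu
    have hur : (0:ℝ) < u ^ r := Real.rpow_pos_of_pos (by linarith) _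
    have hlog : Real.log (ℙ {ω | Y₁ ω * Y₂ ω > u}).toReal ≤ 0 :=
      Real.log_nonpos ENNReal.toReal_nonneg
        (by simpa using ENNReal.toReal_le_of_le_ofReal (by norm_num) (by
          simpa using prob_le_one))
    exact div_nonpos_of_nonpos_of_nonneg hlog hur.le
  have hmain : liminf g atTop ≤ liminf f atTop := liminf_le_liminf hbound hgb hfcb
  rw [hg.liminf_eq] at hmain
  refine le_trans (le_of_eq ?_) hmain
  have hxinv : x⁻¹ = (p₁ * L₁) / (p₂ * L₂) := by rw [hx_def, inv_div]
  rw [hc₁p, hc₂p, hxinv]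
  ring
end

section
/- Let Y1, Y2, Y1*, Y2* be positive random variables with Y1 independent of Y2 and Y1* independent of Y2*, all with log-Weibullian type tails P(Y_i > u) ∼ g_i(u)exp(-L_i u^{p_i}) (g_i regularly varying, L_i, p_i > 0), and suppose P(Y_i* > u) ∼ P(Y_i > u) for i = 1, 2. Then P(Y1*Y2* > u) ∼ P(Y1Y2 > u) as u → ∞. -/
open MeasureTheory ProbabilityTheory Filter Topology Real
open scoped ENNReal NNReal

namespace ProductTailAux

open Set

lemma Rmeas (u : ℝ) : MeasurableSet {p : ℝ × ℝ | p.1 * p.2 > u} :=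
  measurableSet_lt measurable_const (measurable_fst.mul measurable_snd)

lemma tail_meas (sm : Measure ℝ) (u : ℝ) : Measurable fun x : ℝ => sm (Ioi (u / x)) := by
  have h1 : Measurable fun t : ℝ => sm (Ioi t) :=
    Antitone.measurable (fun s t hst => measure_mono (Ioi_subset_Ioi hst))
  exact h1.comp (measurable_const.div measurable_id)

lemma disint (pm sm : Measure ℝ) [IsProbabilityMeasure pm] [IsProbabilityMeasure sm]
    (hpm : pm (Iic 0) = 0) {u : ℝ} (hu : 0 < u) :
    (pm.prod sm) {p : ℝ × ℝ | p.1 * p.2 > u} = ∫⁻ x in Ioi (0:ℝ), sm (Ioi (u / x)) ∂pm := by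
  rw [Measure.prod_apply (Rmeas u)]
  have hres : pm.restrict (Ioi (0:ℝ)) = pm := by
    apply Measure.restrict_eq_self_of_ae_mem
    rw [ae_iff]
    have : {x : ℝ | ¬ x ∈ Ioi (0:ℝ)} = Iic 0 := by ext x; simp [not_lt]
    rw [this]; exact hpm
  calc ∫⁻ x, sm (Prod.mk x ⁻¹' {p : ℝ × ℝ | p.1 * p.2 > u}) ∂pm
      = ∫⁻ x in Ioi (0:ℝ), sm (Prod.mk x ⁻¹' {p : ℝ × ℝ | p.1 * p.2 > u}) ∂pm := by
        rw [hres]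
    _ = ∫⁻ x in Ioi (0:ℝ), sm (Ioi (u / x)) ∂pm := by
        apply setLIntegral_congr_fun measurableSet_Ioi
        intro x hx
        dsimp only
        congr 1
        ext y
        simp only [Set.mem_preimage, Set.mem_setOf_eq, mem_Ioi, gt_iff_lt]
        rw [div_lt_iff₀ hx, mul_comm]

lemma prod_comm_R (pm sm : Measure ℝ) [SFinite pm] [SFinite sm] (u : ℝ) :
    (pm.prod sm) {p : ℝ × ℝ | p.1 * p.2 > u} = (sm.prod pm) {p : ℝ × ℝ | p.1 * p.2 > u} := by
  conv_rhs => rw [← Measure.prod_swap]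
  rw [Measure.map_apply measurable_swap (Rmeas u)]
  congr 1
  ext p
  simp [mul_comm]

lemma rect (pm sm : Measure ℝ) [SFinite pm] [SFinite sm] {a u : ℝ} (ha : 0 < a) (hu : 0 < u) :
    pm (Ioi a) * sm (Ioi (u / a)) ≤ (pm.prod sm) {p : ℝ × ℝ | p.1 * p.2 > u} := by
  rw [← Measure.prod_prod]
  apply measure_mono
  rintro ⟨x, y⟩ ⟨hx, hy⟩
  simp only [mem_Ioi] at hx hy
  have h1 : a * (u / a) < x * y := mul_lt_mul'' hx hy ha.le (div_pos hu ha).le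
  have h2 : a * (u / a) = u := by field_simp
  show u < x * y
  rw [← h2]
  exact h1

lemma key (pm sm sm' : Measure ℝ) [IsProbabilityMeasure pm] [IsProbabilityMeasure sm]
    [IsProbabilityMeasure sm'] (hpm : pm (Iic 0) = 0)
    {v0 u : ℝ} (hv0 : 0 < v0) (hu : 0 < u) (K : ℝ≥0∞)
    (hK : ∀ t, v0 ≤ t → sm' (Ioi t) ≤ K * sm (Ioi t)) :
    (pm.prod sm') {p : ℝ × ℝ | p.1 * p.2 > u}
      ≤ K * (pm.prod sm) {p : ℝ × ℝ | p.1 * p.2 > u} + pm (Ioi (u / v0)) := by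
  rw [disint pm sm' hpm hu, disint pm sm hpm hu]
  have hb : ∀ x ∈ Ioi (0:ℝ), sm' (Ioi (u / x))
      ≤ K * sm (Ioi (u / x)) + (Ioi (u / v0)).indicator (fun _ => (1:ℝ≥0∞)) x := by
    intro x hx
    rcases le_or_gt x (u / v0) with h | h
    · have hvt : v0 ≤ u / x := by
        rw [le_div_iff₀ hx]
        rw [le_div_iff₀ hv0] at h
        linarith
      exact le_trans (hK _ hvt) le_self_add
    · have h2 : (Ioi (u / v0)).indicator (fun _ => (1:ℝ≥0∞)) x = 1 :=
        Set.indicator_of_mem h _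
      calc sm' (Ioi (u / x)) ≤ 1 := prob_le_one
        _ = (Ioi (u / v0)).indicator (fun _ => (1:ℝ≥0∞)) x := h2.symm
        _ ≤ _ := le_add_self
  calc ∫⁻ x in Ioi (0:ℝ), sm' (Ioi (u / x)) ∂pm
      ≤ ∫⁻ x in Ioi (0:ℝ),
          (K * sm (Ioi (u / x)) + (Ioi (u / v0)).indicator (fun _ => (1:ℝ≥0∞)) x) ∂pm :=
        setLIntegral_mono' measurableSet_Ioi hb
    _ = K * ∫⁻ x in Ioi (0:ℝ), sm (Ioi (u / x)) ∂pm
        + ∫⁻ x in Ioi (0:ℝ), (Ioi (u / v0)).indicator (fun _ => (1:ℝ≥0∞)) x ∂pm := by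
        rw [lintegral_add_left ((tail_meas sm u).const_mul K),
          lintegral_const_mul K (tail_meas sm u)]
    _ ≤ K * ∫⁻ x in Ioi (0:ℝ), sm (Ioi (u / x)) ∂pm + pm (Ioi (u / v0)) := by
        gcongr
        calc ∫⁻ x in Ioi (0:ℝ), (Ioi (u / v0)).indicator (fun _ => (1:ℝ≥0∞)) x ∂pm
            ≤ ∫⁻ x, (Ioi (u / v0)).indicator (fun _ => (1:ℝ≥0∞)) x ∂pm :=
              setLIntegral_le_lintegral _ _
          _ = 1 * pm (Ioi (u / v0)) := lintegral_indicator_const measurableSet_Ioi 1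
          _ = pm (Ioi (u / v0)) := one_mul _

lemma tail_pos {μ : Measure ℝ} {g : ℝ → ℝ} {L p : ℝ}
    (h : Tendsto (fun u => (μ (Set.Ioi u)).toReal / (g u * Real.exp (-(L * u ^ p))))
      atTop (𝓝 1)) :
    ∀ t : ℝ, 0 < μ (Set.Ioi t) := by
  intro t
  have h1 : ∀ᶠ u in atTop,
      (1/2 : ℝ) < (μ (Set.Ioi u)).toReal / (g u * Real.exp (-(L * u ^ p))) :=
    h.eventually (eventually_gt_nhds (by norm_num))
  obtain ⟨u₀, hu₀r, hu₀t⟩ := (h1.and (eventually_ge_atTop t)).exists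
  have hne : μ (Set.Ioi u₀) ≠ 0 := by
    intro h0
    rw [h0] at hu₀r
    norm_num at hu₀r
  calc (0:ℝ≥0∞) < μ (Set.Ioi u₀) := pos_iff_ne_zero.mpr hne
    _ ≤ μ (Set.Ioi t) := measure_mono (Ioi_subset_Ioi hu₀t)

lemma tail_ratio_zero {μ : Measure ℝ} [IsFiniteMeasure μ] {g : ℝ → ℝ} {L p ρ : ℝ}
    (hL : 0 < L) (hp : 0 < p) (hgpos : ∀ u > 0, 0 < g u) (hg : RegularlyVarying g ρ)
    (h : Tendsto (fun u => (μ (Set.Ioi u)).toReal / (g u * Real.exp (-(L * u ^ p))))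
      atTop (𝓝 1)) :
    Tendsto (fun s => (μ (Set.Ioi s)).toReal / (μ (Set.Ioi (s / 2))).toReal) atTop (𝓝 0) := by
  have hpos := tail_pos h
  set G : ℝ → ℝ := fun s => g s * Real.exp (-(L * s ^ p)) with hGdef
  set T : ℝ → ℝ := fun s => (μ (Set.Ioi s)).toReal with hTdef
  have hhalf : Tendsto (fun s : ℝ => s / 2) atTop atTop :=
    tendsto_id.atTop_div_const two_pos
  have f1 : Tendsto (fun s => T s / G s) atTop (𝓝 1) := h
  have f2 : Tendsto (fun s => G (s / 2) / T (s / 2)) atTop (𝓝 1) := by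
    have h2 : Tendsto (fun s : ℝ => T (s / 2) / G (s / 2)) atTop (𝓝 1) := h.comp hhalf
    have := h2.inv₀ one_ne_zero
    simpa [inv_div] using this
  have h2p : (1:ℝ) < 2 ^ p := by
    rw [Real.one_lt_rpow_iff_of_pos two_pos]
    left; exact ⟨one_lt_two, hp⟩
  have f3exp : Tendsto (fun s : ℝ => Real.exp (-(L * (2 ^ p - 1) * (s / 2) ^ p)))
      atTop (𝓝 0) := by
    apply Real.tendsto_exp_atBot.comp
    have hc : (0:ℝ) < L * (2 ^ p - 1) := mul_pos hL (by linarith)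
    have hmono : Tendsto (fun s : ℝ => (s / 2) ^ p) atTop atTop :=
      (tendsto_rpow_atTop hp).comp hhalf
    exact tendsto_neg_atTop_atBot.comp (hmono.const_mul_atTop hc)
  have f3g : Tendsto (fun s : ℝ => g (s / 2 * 2) / g (s / 2)) atTop (𝓝 ((2:ℝ) ^ ρ)) :=
    (hg 2 two_pos).comp hhalf
  have hprod : Tendsto (fun s => (T s / G s) * (G (s / 2) / T (s / 2)) *
      ((g (s / 2 * 2) / g (s / 2)) * Real.exp (-(L * (2 ^ p - 1) * (s / 2) ^ p))))
      atTop (𝓝 0) := by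
    have := (f1.mul f2).mul (f3g.mul f3exp)
    simpa using this
  apply Tendsto.congr' _ hprod
  filter_upwards [eventually_gt_atTop (0:ℝ)] with s hs
  have hs2 : (0:ℝ) < s / 2 := by positivity
  have hgs : (0:ℝ) < g s := hgpos s hs
  have hgs2 : (0:ℝ) < g (s / 2) := hgpos _ hs2
  have hTs2 : (0:ℝ) < T (s / 2) := ENNReal.toReal_pos (hpos _).ne' (measure_ne_top _ _)
  have h22 : s / 2 * 2 = s := by ring
  have hexp : s ^ p = (s / 2) ^ p * 2 ^ p := by
    rw [← Real.mul_rpow hs2.le (by norm_num : (0:ℝ) ≤ 2), h22]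
  have hE : Real.exp (-(L * s ^ p))
      = Real.exp (-(L * (s / 2) ^ p)) * Real.exp (-(L * (2 ^ p - 1) * (s / 2) ^ p)) := by
    rw [← Real.exp_add]
    congr 1
    rw [hexp]; ring
  have algebra : ∀ (Ts t2 x y E2 E : ℝ), x ≠ 0 → y ≠ 0 → E2 ≠ 0 → E ≠ 0 → t2 ≠ 0 →
      Ts / (x * (E2 * E)) * (y * E2 / t2) * (x / y * E) = Ts / t2 := by
    intros Ts t2 x y E2 E hx hy hE2 hEE ht2
    field_simp
  have hGs' : G s = g s * (Real.exp (-(L * (s / 2) ^ p))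
      * Real.exp (-(L * (2 ^ p - 1) * (s / 2) ^ p))) := by
    rw [hGdef]
    dsimp only
    rw [hE]
  have hGs2 : G (s / 2) = g (s / 2) * Real.exp (-(L * (s / 2) ^ p)) := rfl
  rw [h22, hGs', hGs2]
  exact algebra _ _ _ _ _ _ hgs.ne' hgs2.ne' (Real.exp_ne_zero _) (Real.exp_ne_zero _)
    hTs2.ne'

lemma tail_cmp {μ ν : Measure ℝ} [IsFiniteMeasure μ] [IsFiniteMeasure ν]
    (hpos : ∀ t, 0 < μ (Set.Ioi t))
    (heq : Tendsto (fun t => (ν (Set.Ioi t)).toReal / (μ (Set.Ioi t)).toReal) atTop (𝓝 1))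
    {ε : ℝ} (hε : 0 < ε) :
    ∀ᶠ t in atTop, ν (Set.Ioi t) ≤ ENNReal.ofReal (1 + ε) * μ (Set.Ioi t)
      ∧ μ (Set.Ioi t) ≤ ENNReal.ofReal (1 + ε) * ν (Set.Ioi t) := by
  have h1 : ∀ᶠ t in atTop,
      (ν (Set.Ioi t)).toReal / (μ (Set.Ioi t)).toReal < 1 + ε :=
    heq.eventually (eventually_lt_nhds (by linarith))
  have h2 : ∀ᶠ t in atTop,
      1 / (1 + ε) < (ν (Set.Ioi t)).toReal / (μ (Set.Ioi t)).toReal :=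
    heq.eventually (eventually_gt_nhds (by rw [div_lt_one (by linarith)]; linarith))
  filter_upwards [h1, h2] with t ht1 ht2
  have hb : (0:ℝ) < (μ (Set.Ioi t)).toReal :=
    ENNReal.toReal_pos (hpos t).ne' (measure_ne_top _ _)
  have hεpos : (0:ℝ) < 1 + ε := by linarith
  constructor
  · have hle : (ν (Set.Ioi t)).toReal ≤ (1 + ε) * (μ (Set.Ioi t)).toReal := by
      rw [div_lt_iff₀ hb] at ht1; linarith
    calc ν (Set.Ioi t) = ENNReal.ofReal (ν (Set.Ioi t)).toReal :=
          (ENNReal.ofReal_toReal (measure_ne_top _ _)).symm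
      _ ≤ ENNReal.ofReal ((1 + ε) * (μ (Set.Ioi t)).toReal) := ENNReal.ofReal_le_ofReal hle
      _ = ENNReal.ofReal (1 + ε) * ENNReal.ofReal (μ (Set.Ioi t)).toReal :=
          ENNReal.ofReal_mul hεpos.le
      _ = ENNReal.ofReal (1 + ε) * μ (Set.Ioi t) := by
          rw [ENNReal.ofReal_toReal (measure_ne_top _ _)]
  · have hle : (μ (Set.Ioi t)).toReal ≤ (1 + ε) * (ν (Set.Ioi t)).toReal := by
      rw [div_lt_div_iff₀ hεpos hb] at ht2; linarith
    calc μ (Set.Ioi t) = ENNReal.ofReal (μ (Set.Ioi t)).toReal :=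
          (ENNReal.ofReal_toReal (measure_ne_top _ _)).symm
      _ ≤ ENNReal.ofReal ((1 + ε) * (ν (Set.Ioi t)).toReal) := ENNReal.ofReal_le_ofReal hle
      _ = ENNReal.ofReal (1 + ε) * ENNReal.ofReal (ν (Set.Ioi t)).toReal :=
          ENNReal.ofReal_mul hεpos.le
      _ = ENNReal.ofReal (1 + ε) * ν (Set.Ioi t) := by
          rw [ENNReal.ofReal_toReal (measure_ne_top _ _)]

end ProductTailAux

open Set ProductTailAux

set_option maxHeartbeats 1600000 in
theorem product_tail_equivalence_stability
    {Ω : Type*} [MeasureSpace Ω] [IsProbabilityMeasure (ℙ : Measure Ω)]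
    (Y₁ Y₂ Y₁s Y₂s : Ω → ℝ)
    (hY₁ : Measurable Y₁) (hY₂ : Measurable Y₂)
    (hY₁s : Measurable Y₁s) (hY₂s : Measurable Y₂s)
    (hindep : IndepFun Y₁ Y₂) (hindeps : IndepFun Y₁s Y₂s)
    (hY₁pos : ∀ᵐ ω ∂ℙ, 0 < Y₁ ω) (hY₂pos : ∀ᵐ ω ∂ℙ, 0 < Y₂ ω)
    (hY₁spos : ∀ᵐ ω ∂ℙ, 0 < Y₁s ω) (hY₂spos : ∀ᵐ ω ∂ℙ, 0 < Y₂s ω)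
    (L₁ L₂ p₁ p₂ : ℝ) (hL₁ : 0 < L₁) (hL₂ : 0 < L₂) (hp₁ : 0 < p₁) (hp₂ : 0 < p₂)
    (g₁ g₂ : ℝ → ℝ) (hg₁pos : ∀ u > 0, 0 < g₁ u) (hg₂pos : ∀ u > 0, 0 < g₂ u)
    (ρ₁ ρ₂ : ℝ) (hg₁ : RegularlyVarying g₁ ρ₁) (hg₂ : RegularlyVarying g₂ ρ₂)
    (h₁ : Tendsto (fun u => (ℙ {ω | Y₁ ω > u}).toReal /
        (g₁ u * Real.exp (-(L₁ * u ^ p₁)))) atTop (𝓝 1))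
    (h₂ : Tendsto (fun u => (ℙ {ω | Y₂ ω > u}).toReal /
        (g₂ u * Real.exp (-(L₂ * u ^ p₂)))) atTop (𝓝 1))
    (heq₁ : Tendsto (fun u => (ℙ {ω | Y₁s ω > u}).toReal /
        (ℙ {ω | Y₁ ω > u}).toReal) atTop (𝓝 1))
    (heq₂ : Tendsto (fun u => (ℙ {ω | Y₂s ω > u}).toReal /
        (ℙ {ω | Y₂ ω > u}).toReal) atTop (𝓝 1)) :
    Tendsto (fun u => (ℙ {ω | Y₁s ω * Y₂s ω > u}).toReal /
        (ℙ {ω | Y₁ ω * Y₂ ω > u}).toReal) atTop (𝓝 1) := by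
  classical
  set μ1 : Measure ℝ := Measure.map Y₁ ℙ with hμ1def
  set μ2 : Measure ℝ := Measure.map Y₂ ℙ with hμ2def
  set ν1 : Measure ℝ := Measure.map Y₁s ℙ with hν1def
  set ν2 : Measure ℝ := Measure.map Y₂s ℙ with hν2def
  haveI : IsProbabilityMeasure μ1 := Measure.isProbabilityMeasure_map hY₁.aemeasurable
  haveI : IsProbabilityMeasure μ2 := Measure.isProbabilityMeasure_map hY₂.aemeasurable
  haveI : IsProbabilityMeasure ν1 := Measure.isProbabilityMeasure_map hY₁s.aemeasurable
  haveI : IsProbabilityMeasure ν2 := Measure.isProbabilityMeasure_map hY₂s.aemeasurable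
  have hT1 : ∀ t : ℝ, ℙ {ω | Y₁ ω > t} = μ1 (Ioi t) := fun t => by
    rw [hμ1def, Measure.map_apply hY₁ measurableSet_Ioi]; rfl
  have hT2 : ∀ t : ℝ, ℙ {ω | Y₂ ω > t} = μ2 (Ioi t) := fun t => by
    rw [hμ2def, Measure.map_apply hY₂ measurableSet_Ioi]; rfl
  have hS1 : ∀ t : ℝ, ℙ {ω | Y₁s ω > t} = ν1 (Ioi t) := fun t => by
    rw [hν1def, Measure.map_apply hY₁s measurableSet_Ioi]; rfl
  have hS2 : ∀ t : ℝ, ℙ {ω | Y₂s ω > t} = ν2 (Ioi t) := fun t => by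
    rw [hν2def, Measure.map_apply hY₂s measurableSet_Ioi]; rfl
  have hIic : ∀ (Y : Ω → ℝ), Measurable Y → (∀ᵐ ω ∂ℙ, 0 < Y ω) →
      (Measure.map Y ℙ) (Iic 0) = 0 := by
    intro Y hY hYpos
    rw [Measure.map_apply hY measurableSet_Iic]
    have h0 : ℙ {ω | ¬ 0 < Y ω} = 0 := ae_iff.mp hYpos
    have hset : Y ⁻¹' Iic 0 = {ω | ¬ 0 < Y ω} := by ext ω; simp [not_lt]
    rw [hset]; exact h0
  have hμ1Iic : μ1 (Iic 0) = 0 := hIic Y₁ hY₁ hY₁pos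
  have hμ2Iic : μ2 (Iic 0) = 0 := hIic Y₂ hY₂ hY₂pos
  have hν1Iic : ν1 (Iic 0) = 0 := hIic Y₁s hY₁s hY₁spos
  have hν2Iic : ν2 (Iic 0) = 0 := hIic Y₂s hY₂s hY₂spos
  simp only [hT1] at h₁ heq₁
  simp only [hT2] at h₂ heq₂
  simp only [hS1] at heq₁
  simp only [hS2] at heq₂
  -- product representation
  have hmapA : Measure.map (fun ω => (Y₁ ω, Y₂ ω)) ℙ = μ1.prod μ2 :=
    (indepFun_iff_map_prod_eq_prod_map_map hY₁.aemeasurable hY₂.aemeasurable).mp hindep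
  have hmapN : Measure.map (fun ω => (Y₁s ω, Y₂s ω)) ℙ = ν1.prod ν2 :=
    (indepFun_iff_map_prod_eq_prod_map_map hY₁s.aemeasurable hY₂s.aemeasurable).mp hindeps
  have hAeq : ∀ u : ℝ, ℙ {ω | Y₁ ω * Y₂ ω > u}
      = (μ1.prod μ2) {p : ℝ × ℝ | p.1 * p.2 > u} := by
    intro u
    rw [← hmapA, Measure.map_apply (hY₁.prodMk hY₂) (Rmeas u)]
    rfl
  have hNeq : ∀ u : ℝ, ℙ {ω | Y₁s ω * Y₂s ω > u}
      = (ν1.prod ν2) {p : ℝ × ℝ | p.1 * p.2 > u} := by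
    intro u
    rw [← hmapN, Measure.map_apply (hY₁s.prodMk hY₂s) (Rmeas u)]
    rfl
  simp only [hAeq, hNeq]
  set A : ℝ → ℝ≥0∞ := fun u => (μ1.prod μ2) {p : ℝ × ℝ | p.1 * p.2 > u} with hAdef
  set N : ℝ → ℝ≥0∞ := fun u => (ν1.prod ν2) {p : ℝ × ℝ | p.1 * p.2 > u} with hNdef
  have hpos1 : ∀ t, 0 < μ1 (Ioi t) := tail_pos h₁
  have hpos2 : ∀ t, 0 < μ2 (Ioi t) := tail_pos h₂
  have hAfin : ∀ u, A u ≠ ⊤ := fun u => measure_ne_top _ _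
  have hApos : ∀ u : ℝ, 0 < u → 0 < A u := by
    intro u hu
    have h1 := rect μ1 μ2 (a := 1) one_pos hu
    rw [div_one] at h1
    calc (0:ℝ≥0∞) < μ1 (Ioi 1) * μ2 (Ioi u) :=
          ENNReal.mul_pos (hpos1 1).ne' (hpos2 u).ne'
      _ ≤ A u := h1
  rw [Metric.tendsto_atTop]
  intro δ hδ
  set ε : ℝ := min δ 1 / 8 with hεdef
  have hminpos : 0 < min δ 1 := lt_min hδ one_pos
  have hε : 0 < ε := by positivity
  have hε1 : ε ≤ 1 / 8 := by
    rw [hεdef]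
    have : min δ 1 ≤ 1 := min_le_right _ _
    linarith
  have hεδ : 8 * ε ≤ δ := by
    rw [hεdef]
    have : min δ 1 ≤ δ := min_le_left _ _
    linarith
  -- tail comparisons
  obtain ⟨v1, hv1⟩ := eventually_atTop.mp ((tail_cmp hpos1 heq₁ hε).and (tail_cmp hpos2 heq₂ hε))
  set v0 : ℝ := max v1 1 with hv0def
  have hv0 : (0:ℝ) < v0 := lt_of_lt_of_le one_pos (le_max_right _ _)
  have hcmp := fun (t : ℝ) (ht : v0 ≤ t) => hv1 t (le_trans (le_max_left _ _) ht)
  set K : ℝ≥0∞ := ENNReal.ofReal (1 + ε) with hKdef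
  have hKtop : K ≠ ⊤ := ENNReal.ofReal_ne_top
  have hKto : K.toReal = 1 + ε := ENNReal.toReal_ofReal (by linarith)
  -- smallness of remainder tails relative to A
  have hdivv0 : Tendsto (fun u : ℝ => u / v0) atTop atTop := tendsto_id.atTop_div_const hv0
  have hr1 : Tendsto (fun u => (μ1 (Ioi (u / v0))).toReal
      / (μ1 (Ioi (u / v0 / 2))).toReal) atTop (𝓝 0) :=
    (tail_ratio_zero hL₁ hp₁ hg₁pos hg₁ h₁).comp hdivv0
  have hr2 : Tendsto (fun u => (μ2 (Ioi (u / v0))).toReal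
      / (μ2 (Ioi (u / v0 / 2))).toReal) atTop (𝓝 0) :=
    (tail_ratio_zero hL₂ hp₂ hg₂pos hg₂ h₂).comp hdivv0
  set c1 : ℝ := (μ1 (Ioi (2 * v0))).toReal with hc1def
  set c2 : ℝ := (μ2 (Ioi (2 * v0))).toReal with hc2def
  have hc1pos : 0 < c1 := ENNReal.toReal_pos (hpos1 _).ne' (measure_ne_top _ _)
  have hc2pos : 0 < c2 := ENNReal.toReal_pos (hpos2 _).ne' (measure_ne_top _ _)
  have hbound1 : ∀ u : ℝ, 0 < u → (μ1 (Ioi (u / v0))).toReal / (A u).toReal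
      ≤ ((μ1 (Ioi (u / v0))).toReal / (μ1 (Ioi (u / v0 / 2))).toReal) / c2 := by
    intro u hu
    have hrect : c2 * (μ1 (Ioi (u / v0 / 2))).toReal ≤ (A u).toReal := by
      have h1 := rect μ1 μ2 (a := u / v0 / 2) (by positivity) hu
      have harg : u / (u / v0 / 2) = 2 * v0 := by
        field_simp
      rw [harg] at h1
      calc c2 * (μ1 (Ioi (u / v0 / 2))).toReal
          = ((μ1 (Ioi (u / v0 / 2))) * (μ2 (Ioi (2 * v0)))).toReal := by
            rw [ENNReal.toReal_mul]; ring
        _ ≤ (A u).toReal := ENNReal.toReal_mono (hAfin u) h1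
    have hcpos : 0 < c2 * (μ1 (Ioi (u / v0 / 2))).toReal :=
      mul_pos hc2pos (ENNReal.toReal_pos (hpos1 _).ne' (measure_ne_top _ _))
    calc (μ1 (Ioi (u / v0))).toReal / (A u).toReal
        ≤ (μ1 (Ioi (u / v0))).toReal / (c2 * (μ1 (Ioi (u / v0 / 2))).toReal) := by
          apply div_le_div_of_nonneg_left ENNReal.toReal_nonneg hcpos hrect
      _ = ((μ1 (Ioi (u / v0))).toReal / (μ1 (Ioi (u / v0 / 2))).toReal) / c2 := by
          rw [div_mul_eq_div_div_swap]
  have hbound2 : ∀ u : ℝ, 0 < u → (μ2 (Ioi (u / v0))).toReal / (A u).toReal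
      ≤ ((μ2 (Ioi (u / v0))).toReal / (μ2 (Ioi (u / v0 / 2))).toReal) / c1 := by
    intro u hu
    have hrect : c1 * (μ2 (Ioi (u / v0 / 2))).toReal ≤ (A u).toReal := by
      have h1 := rect μ1 μ2 (a := 2 * v0) (by positivity) hu
      have harg : u / (2 * v0) = u / v0 / 2 := by
        rw [div_div, mul_comm]
      rw [harg] at h1
      calc c1 * (μ2 (Ioi (u / v0 / 2))).toReal
          = ((μ1 (Ioi (2 * v0))) * (μ2 (Ioi (u / v0 / 2)))).toReal := by
            rw [ENNReal.toReal_mul]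
        _ ≤ (A u).toReal := ENNReal.toReal_mono (hAfin u) h1
    have hcpos : 0 < c1 * (μ2 (Ioi (u / v0 / 2))).toReal :=
      mul_pos hc1pos (ENNReal.toReal_pos (hpos2 _).ne' (measure_ne_top _ _))
    calc (μ2 (Ioi (u / v0))).toReal / (A u).toReal
        ≤ (μ2 (Ioi (u / v0))).toReal / (c1 * (μ2 (Ioi (u / v0 / 2))).toReal) := by
          apply div_le_div_of_nonneg_left ENNReal.toReal_nonneg hcpos hrect
      _ = ((μ2 (Ioi (u / v0))).toReal / (μ2 (Ioi (u / v0 / 2))).toReal) / c1 := by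
          rw [div_mul_eq_div_div_swap]
  have hsmall : Tendsto (fun u => ((μ1 (Ioi (u / v0))).toReal
      + (μ2 (Ioi (u / v0))).toReal) / (A u).toReal) atTop (𝓝 0) := by
    have hlim := (hr1.div_const c2).add (hr2.div_const c1)
    apply squeeze_zero' ?_ ?_ (by simpa using hlim)
    · filter_upwards with u
      positivity
    · filter_upwards [eventually_gt_atTop (0:ℝ)] with u hu
      rw [add_div]
      exact add_le_add (hbound1 u hu) (hbound2 u hu)
  have hmain : ∀ᶠ u in atTop, dist ((N u).toReal / (A u).toReal) 1 < δ := by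
    filter_upwards [eventually_gt_atTop (0:ℝ), eventually_ge_atTop (v0 * v0),
      hsmall.eventually (eventually_lt_nhds hε)] with u hu huv hru
    have hv0u : v0 ≤ u / v0 := (le_div_iff₀ hv0).mpr huv
    -- ENNReal chains
    have hK1 : (1:ℝ≥0∞) ≤ K := by
      rw [hKdef]
      exact ENNReal.one_le_ofReal.mpr (by linarith)
    set m : ℝ≥0∞ := μ1 (Ioi (u / v0)) + μ2 (Ioi (u / v0)) with hmdef
    have hmfin : m ≠ ⊤ :=
      ENNReal.add_ne_top.mpr ⟨measure_ne_top _ _, measure_ne_top _ _⟩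
    have hNbound : N u ≤ K * K * A u + K * m := by
      have hstep1 : N u ≤ K * ((ν1.prod μ2) {p : ℝ × ℝ | p.1 * p.2 > u})
          + ν1 (Ioi (u / v0)) :=
        key ν1 μ2 ν2 hν1Iic hv0 hu K (fun t ht => (hcmp t ht).2.1)
      have hswap1 : (ν1.prod μ2) {p : ℝ × ℝ | p.1 * p.2 > u}
          = (μ2.prod ν1) {p : ℝ × ℝ | p.1 * p.2 > u} := prod_comm_R _ _ _
      have hstep2 : (μ2.prod ν1) {p : ℝ × ℝ | p.1 * p.2 > u}
          ≤ K * ((μ2.prod μ1) {p : ℝ × ℝ | p.1 * p.2 > u}) + μ2 (Ioi (u / v0)) :=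
        key μ2 μ1 ν1 hμ2Iic hv0 hu K (fun t ht => (hcmp t ht).1.1)
      have hswap2 : (μ2.prod μ1) {p : ℝ × ℝ | p.1 * p.2 > u} = A u := prod_comm_R _ _ _
      have hν1m : ν1 (Ioi (u / v0)) ≤ K * μ1 (Ioi (u / v0)) := (hcmp _ hv0u).1.1
      calc N u ≤ K * ((μ2.prod ν1) {p : ℝ × ℝ | p.1 * p.2 > u}) + ν1 (Ioi (u / v0)) := by
            rw [← hswap1]; exact hstep1
        _ ≤ K * (K * A u + μ2 (Ioi (u / v0))) + K * μ1 (Ioi (u / v0)) := by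
            gcongr
            rw [← hswap2]; exact hstep2
        _ = K * K * A u + K * m := by
            rw [hmdef]; ring
    have hAbound : A u ≤ K * K * N u + K * K * m := by
      have hstep1 : A u ≤ K * ((μ1.prod ν2) {p : ℝ × ℝ | p.1 * p.2 > u})
          + μ1 (Ioi (u / v0)) :=
        key μ1 ν2 μ2 hμ1Iic hv0 hu K (fun t ht => (hcmp t ht).2.2)
      have hswap1 : (μ1.prod ν2) {p : ℝ × ℝ | p.1 * p.2 > u}
          = (ν2.prod μ1) {p : ℝ × ℝ | p.1 * p.2 > u} := prod_comm_R _ _ _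
      have hstep2 : (ν2.prod μ1) {p : ℝ × ℝ | p.1 * p.2 > u}
          ≤ K * ((ν2.prod ν1) {p : ℝ × ℝ | p.1 * p.2 > u}) + ν2 (Ioi (u / v0)) :=
        key ν2 ν1 μ1 hν2Iic hv0 hu K (fun t ht => (hcmp t ht).1.2)
      have hswap2 : (ν2.prod ν1) {p : ℝ × ℝ | p.1 * p.2 > u} = N u := prod_comm_R _ _ _
      have hν2m : ν2 (Ioi (u / v0)) ≤ K * μ2 (Ioi (u / v0)) := (hcmp _ hv0u).2.1
      have hμ1m : μ1 (Ioi (u / v0)) ≤ K * K * μ1 (Ioi (u / v0)) := by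
        conv_lhs => rw [← one_mul (μ1 (Ioi (u / v0)))]
        gcongr
        calc (1:ℝ≥0∞) = 1 * 1 := (one_mul 1).symm
          _ ≤ K * K := by gcongr
      calc A u ≤ K * ((ν2.prod μ1) {p : ℝ × ℝ | p.1 * p.2 > u}) + μ1 (Ioi (u / v0)) := by
            rw [← hswap1]; exact hstep1
        _ ≤ K * (K * N u + K * μ2 (Ioi (u / v0))) + K * K * μ1 (Ioi (u / v0)) := by
            gcongr
            rw [← hswap2]
            exact le_trans hstep2 (by gcongr)
        _ = K * K * N u + K * K * m := by
            rw [hmdef]; ring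
    -- convert to reals
    have hNfin : N u ≠ ⊤ := measure_ne_top _ _
    have hmto : m.toReal = (μ1 (Ioi (u / v0))).toReal + (μ2 (Ioi (u / v0))).toReal := by
      rw [hmdef]
      exact ENNReal.toReal_add (measure_ne_top _ _) (measure_ne_top _ _)
    set a : ℝ := (A u).toReal with hadef
    set n : ℝ := (N u).toReal with hndef
    set r : ℝ := m.toReal with hrdef
    have ha : 0 < a := ENNReal.toReal_pos (hApos u hu).ne' (hAfin u)
    have hn : 0 ≤ n := ENNReal.toReal_nonneg
    have hr0 : 0 ≤ r := ENNReal.toReal_nonneg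
    have hrε : r < ε * a := by
      have h' := hru
      rw [← hmto] at h'
      rwa [div_lt_iff₀ ha] at h'
    have hNle : n ≤ (1 + ε) * (1 + ε) * a + (1 + ε) * r := by
      have hfin2 : K * K * A u + K * m ≠ ⊤ :=
        ENNReal.add_ne_top.mpr ⟨ENNReal.mul_ne_top (ENNReal.mul_ne_top hKtop hKtop) (hAfin u),
          ENNReal.mul_ne_top hKtop hmfin⟩
      have := ENNReal.toReal_mono hfin2 hNbound
      rwa [ENNReal.toReal_add (ENNReal.mul_ne_top (ENNReal.mul_ne_top hKtop hKtop) (hAfin u))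
          (ENNReal.mul_ne_top hKtop hmfin), ENNReal.toReal_mul, ENNReal.toReal_mul,
        ENNReal.toReal_mul, hKto] at this
    have hAle : a ≤ (1 + ε) * (1 + ε) * n + (1 + ε) * (1 + ε) * r := by
      have hfin2 : K * K * N u + K * K * m ≠ ⊤ :=
        ENNReal.add_ne_top.mpr ⟨ENNReal.mul_ne_top (ENNReal.mul_ne_top hKtop hKtop) hNfin,
          ENNReal.mul_ne_top (ENNReal.mul_ne_top hKtop hKtop) hmfin⟩
      have := ENNReal.toReal_mono hfin2 hAbound
      rwa [ENNReal.toReal_add (ENNReal.mul_ne_top (ENNReal.mul_ne_top hKtop hKtop) hNfin)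
          (ENNReal.mul_ne_top (ENNReal.mul_ne_top hKtop hKtop) hmfin), ENNReal.toReal_mul,
        ENNReal.toReal_mul, ENNReal.toReal_mul, ENNReal.toReal_mul, hKto] at this
    have hupper : n / a ≤ 1 + 7 * ε := by
      rw [div_le_iff₀ ha]
      nlinarith [hNle, hrε, ha.le, hε.le, hε1, mul_nonneg hε.le ha.le]
    have hlower : 1 - 7 * ε ≤ n / a := by
      rw [le_div_iff₀ ha]
      nlinarith [hAle, hrε, ha.le, hε.le, hε1, hn, mul_nonneg hε.le ha.le,
        mul_nonneg (mul_nonneg hε.le hε.le) ha.le,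
        mul_nonneg (mul_nonneg hε.le hε.le) hn,
        mul_nonneg hε.le hn]
    rw [Real.dist_eq]
    have habs : |n / a - 1| ≤ 7 * ε := abs_le.mpr ⟨by linarith, by linarith⟩
    calc |n / a - 1| ≤ 7 * ε := habs
      _ < 8 * ε := by linarith
      _ ≤ δ := hεδ
  exact eventually_atTop.mp hmain
end

section
/- Let S and Y be independent, S ∈ (0,1] a.s. with right endpoint of its distribution equal to 1, and Y in the Gumbel max-domain of attraction with auxiliary function a regularly varying with index -τ, τ ≥ -1. Then for every fixed z ≥ 0 and every w ∈ (0,1), P(SY > u + a(u)z) ∼ ∫_w^1 P(Y > (u + a(u)z)/s) dG(s) as u → ∞, where G is the distribution of S. -/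
open MeasureTheory ProbabilityTheory Filter Topology Real

section Analysis

variable (ψ a : ℝ → ℝ)

set_option maxHeartbeats 2000000 in
/-- Uniform (in σ ∈ [0,S]) two-sided bounds from the Gumbel condition. -/
lemma gumbel_dini (hmono : ∀ ⦃x y : ℝ⦄, x ≤ y → ψ y ≤ ψ x) (hpos : ∀ t, 0 < ψ t)
    (hapos : ∀ u > 0, 0 < a u)
    (hGum : ∀ t : ℝ, 0 ≤ t → Tendsto (fun u => ψ (u + a u * t) / ψ u) atTop (𝓝 (Real.exp (-t))))
    (δ S : ℝ) (hδ0 : 0 < δ) (hδ1 : δ ≤ 1) (hS : 1 ≤ S) :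
    ∃ T : ℝ, 0 < T ∧ ∀ t ≥ T, 0 < t ∧ ∀ σ, 0 ≤ σ → σ ≤ S →
      (1-δ) * Real.exp (-σ) * ψ t ≤ ψ (t + a t * σ) ∧
        ψ (t + a t * σ) ≤ (1+δ) * Real.exp (-σ) * ψ t := by
  have hlog : 0 < Real.log (1 + δ/4) := Real.log_pos (by linarith)
  set n : ℕ := max 1 ⌈S / Real.log (1 + δ/4)⌉₊ with hn
  have hn1 : 1 ≤ n := le_max_left _ _
  have hn0 : (0:ℝ) < n := by exact_mod_cast Nat.lt_of_lt_of_le one_pos hn1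
  set h : ℝ := S / n with hh
  have hh0 : 0 < h := div_pos (by linarith) hn0
  have hhle : h ≤ Real.log (1 + δ/4) := by
    rw [div_le_iff₀ hn0]
    have h1 : S / Real.log (1 + δ/4) ≤ (⌈S / Real.log (1 + δ/4)⌉₊ : ℝ) := Nat.le_ceil _
    have h2 : (⌈S / Real.log (1 + δ/4)⌉₊ : ℝ) ≤ n := by
      exact_mod_cast Nat.le_max_right 1 _
    rw [div_le_iff₀ hlog] at h1
    nlinarith
  have hexph : Real.exp h ≤ 1 + δ/4 := by
    rw [← Real.exp_log (show (0:ℝ) < 1 + δ/4 by linarith)]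
    exact Real.exp_le_exp.2 hhle
  -- grid bounds, for each i ≤ n+1
  have hgrid : ∀ i ∈ Finset.range (n+2), ∀ᶠ t in atTop,
      (1-δ/4) * Real.exp (-(i*h)) * ψ t ≤ ψ (t + a t * (i*h)) ∧
        ψ (t + a t * (i*h)) ≤ (1+δ/4) * Real.exp (-(i*h)) * ψ t := by
    intro i _
    have hih : (0:ℝ) ≤ i * h := by positivity
    have htd := hGum (i*h) hih
    have e1 := htd.eventually_const_lt
      (show (1-δ/4) * Real.exp (-(i*h)) < Real.exp (-(i*h)) by
        nlinarith [Real.exp_pos (-(i*h : ℝ))])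
    have e2 := htd.eventually_lt_const
      (show Real.exp (-(i*h)) < (1+δ/4) * Real.exp (-(i*h)) by
        nlinarith [Real.exp_pos (-(i*h : ℝ))])
    filter_upwards [e1, e2] with t h1 h2
    have hψt := hpos t
    constructor
    · rw [lt_div_iff₀ hψt] at h1; linarith
    · rw [div_lt_iff₀ hψt] at h2; linarith
  have hall := (Filter.eventually_all_finset (Finset.range (n+2))).2 hgrid
  rw [eventually_atTop] at hall
  obtain ⟨T₀, hT₀⟩ := hall
  refine ⟨max T₀ 1, lt_of_lt_of_le one_pos (le_max_right _ _), fun t ht => ?_⟩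
  have ht1 : (1:ℝ) ≤ t := le_trans (le_max_right _ _) ht
  have ht0 : 0 < t := by linarith
  have hat : 0 < a t := hapos t ht0
  refine ⟨ht0, fun σ hσ0 hσS => ?_⟩
  have hG := hT₀ t (le_trans (le_max_left _ _) ht)
  set i : ℕ := ⌊σ / h⌋₊ with hi
  have hin : i ≤ n := by
    have : σ / h ≤ (n:ℝ) := by
      rw [div_le_iff₀ hh0, hh]
      field_simp
      linarith
    calc i ≤ ⌊(n:ℝ)⌋₊ := Nat.floor_le_floor (by exact_mod_cast this)
      _ = n := Nat.floor_natCast n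
  have hmem1 : i ∈ Finset.range (n+2) := Finset.mem_range.2 (by omega)
  have hmem2 : i + 1 ∈ Finset.range (n+2) := Finset.mem_range.2 (by omega)
  have hlow : (i:ℝ) * h ≤ σ := by
    have h2 := Nat.floor_le (show 0 ≤ σ / h by positivity)
    rw [← hi] at h2
    calc (i:ℝ) * h ≤ (σ / h) * h := by nlinarith
      _ = σ := by field_simp
  have hhigh : σ ≤ ((i:ℝ) + 1) * h := by
    have h2 := (Nat.lt_floor_add_one (σ / h)).le
    rw [← hi] at h2
    calc σ = (σ / h) * h := by field_simp
      _ ≤ ((i:ℝ) + 1) * h := by nlinarith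
  obtain ⟨g1l, g1u⟩ := hG i hmem1
  obtain ⟨g2l, g2u⟩ := hG (i+1) hmem2
  have hcast : ((i+1 : ℕ) : ℝ) * h = ((i:ℝ) + 1) * h := by push_cast; ring
  rw [hcast] at g2l g2u
  have hψt := hpos t
  -- abstract away the grid points
  set x1 : ℝ := (i:ℝ) * h with hx1
  set x2 : ℝ := ((i:ℝ) + 1) * h with hx2
  have hx21 : x2 = x1 + h := by rw [hx1, hx2]; ring
  have hx1nn : 0 ≤ x1 := by positivity
  clear_value x1 x2
  clear hx1 hx2 hG hgrid hT₀ hhle hmem1 hmem2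
  clear_value i
  clear hi hin
  clear_value h
  clear hh
  clear_value n
  clear hn hn0 hn1 hlog
  have hme : Real.exp (-h) * Real.exp h = 1 := by rw [← Real.exp_add]; simp
  have hexpnh : 1 - δ/4 ≤ Real.exp (-h) := by
    have h2 : (1 - δ/4) * Real.exp h ≤ 1 := by nlinarith [Real.exp_pos h]
    nlinarith [Real.exp_pos h]
  have hfac1 : Real.exp (-x1) ≤ Real.exp h * Real.exp (-σ) := by
    rw [← Real.exp_add]
    exact Real.exp_le_exp.2 (by linarith)
  have hfac2 : Real.exp (-h) * Real.exp (-σ) ≤ Real.exp (-x2) := by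
    rw [← Real.exp_add]
    exact Real.exp_le_exp.2 (by linarith)
  constructor
  · have m1 : ψ (t + a t * x2) ≤ ψ (t + a t * σ) := by
      apply hmono; nlinarith
    have k1 : (1-δ/4) * (Real.exp (-h) * Real.exp (-σ)) ≤ (1-δ/4) * Real.exp (-x2) :=
      mul_le_mul_of_nonneg_left hfac2 (by linarith)
    have e3 : (1-δ) ≤ (1-δ/4) * Real.exp (-h) := by nlinarith [hexpnh]
    have k2 : (1-δ) * Real.exp (-σ) ≤ (1-δ/4) * (Real.exp (-h) * Real.exp (-σ)) := by
      calc (1-δ) * Real.exp (-σ) ≤ ((1-δ/4) * Real.exp (-h)) * Real.exp (-σ) :=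
            mul_le_mul_of_nonneg_right e3 (Real.exp_pos _).le
        _ = (1-δ/4) * (Real.exp (-h) * Real.exp (-σ)) := by ring
    have key : (1-δ) * Real.exp (-σ) ≤ (1-δ/4) * Real.exp (-x2) := k2.trans k1
    calc (1-δ) * Real.exp (-σ) * ψ t ≤ (1-δ/4) * Real.exp (-x2) * ψ t :=
          mul_le_mul_of_nonneg_right key hψt.le
      _ ≤ ψ (t + a t * x2) := g2l
      _ ≤ ψ (t + a t * σ) := m1
  · have m2 : ψ (t + a t * σ) ≤ ψ (t + a t * x1) := by
      apply hmono; nlinarith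
    have k1 : (1+δ/4) * Real.exp (-x1) ≤ (1+δ/4) * (Real.exp h * Real.exp (-σ)) :=
      mul_le_mul_of_nonneg_left hfac1 (by linarith)
    have e3 : (1+δ/4) * Real.exp h ≤ (1+δ) := by nlinarith [hexph, Real.exp_pos h]
    have k2 : (1+δ/4) * (Real.exp h * Real.exp (-σ)) ≤ (1+δ) * Real.exp (-σ) := by
      calc (1+δ/4) * (Real.exp h * Real.exp (-σ)) = ((1+δ/4) * Real.exp h) * Real.exp (-σ) := by
            ring
        _ ≤ (1+δ) * Real.exp (-σ) := mul_le_mul_of_nonneg_right e3 (Real.exp_pos _).le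
    have key : (1+δ/4) * Real.exp (-x1) ≤ (1+δ) * Real.exp (-σ) := k1.trans k2
    calc ψ (t + a t * σ) ≤ ψ (t + a t * x1) := m2
      _ ≤ (1+δ/4) * Real.exp (-x1) * ψ t := g1u
      _ ≤ (1+δ) * Real.exp (-σ) * ψ t := mul_le_mul_of_nonneg_right key hψt.le

set_option maxHeartbeats 2000000 in
/-- Near-self-neglecting property of the auxiliary function. -/
lemma gumbel_sn (hmono : ∀ ⦃x y : ℝ⦄, x ≤ y → ψ y ≤ ψ x) (hpos : ∀ t, 0 < ψ t)
    (hapos : ∀ u > 0, 0 < a u)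
    (hGum : ∀ t : ℝ, 0 ≤ t → Tendsto (fun u => ψ (u + a u * t) / ψ u) atTop (𝓝 (Real.exp (-t))))
    (η : ℝ) (hη0 : 0 < η) (hη1 : η ≤ 1/2) :
    ∃ T : ℝ, 0 < T ∧ ∀ t ≥ T, 0 < t ∧ 0 < a t ∧ ∀ σ₀, 0 ≤ σ₀ → σ₀ ≤ 1 →
      (1-η) * a t ≤ a (t + a t * σ₀) ∧ a (t + a t * σ₀) ≤ a t / (1-η) := by
  set δ : ℝ := η/8 with hδ
  obtain ⟨T, hT0, hd⟩ := gumbel_dini ψ a hmono hpos hapos hGum δ 3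
    (by positivity) (by linarith) (by norm_num)
  refine ⟨T, hT0, fun t ht => ?_⟩
  obtain ⟨ht0, hdt⟩ := hd t ht
  have hat : 0 < a t := hapos t ht0
  refine ⟨ht0, hat, fun σ₀ hσ₀0 hσ₀1 => ?_⟩
  set t' : ℝ := t + a t * σ₀ with ht'
  have htt' : t ≤ t' := by nlinarith
  obtain ⟨ht'0, hdt'⟩ := hd t' (le_trans ht htt')
  have hat' : 0 < a t' := hapos t' ht'0
  set m : ℝ := min (a t') (a t) with hm
  have hm0 : 0 < m := lt_min hat' hat
  have hmat : m ≤ a t := min_le_right _ _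
  have hmat' : m ≤ a t' := min_le_left _ _
  set σ₁ : ℝ := σ₀ + m / a t with hσ₁
  have hmdiv : m / a t ≤ 1 := by rw [div_le_one hat]; exact hmat
  have hσ₁0 : 0 ≤ σ₁ := by rw [hσ₁]; positivity
  have hσ₁3 : σ₁ ≤ 3 := by rw [hσ₁]; linarith
  have hp1 : t + a t * σ₁ = t' + m := by
    rw [hσ₁, ht']; field_simp; ring
  have hp2 : t' + a t' * (m / a t') = t' + m := by field_simp
  obtain ⟨A1, A2⟩ := hdt σ₁ hσ₁0 hσ₁3
  rw [hp1] at A1 A2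
  obtain ⟨B1, B2⟩ := hdt' (m / a t') (by positivity)
    (by have h9 : m / a t' ≤ 1 := by rw [div_le_one hat']; exact hmat'
        linarith)
  rw [hp2] at B1 B2
  obtain ⟨C1, C2⟩ := hdt σ₀ hσ₀0 (by linarith)
  rw [← ht'] at C1 C2
  have hψt := hpos t
  have hψt' := hpos t'
  have hδ01 : 0 < 1 - δ := by rw [hδ]; linarith
  have hsplit : Real.exp (-σ₁) = Real.exp (-σ₀) * Real.exp (-(m / a t)) := by
    rw [← Real.exp_add, hσ₁]; ring_nf
  clear_value σ₁ t' m
  -- chain A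
  have chainA : ((1-δ) * Real.exp (-(m / a t))) * (Real.exp (-σ₀) * ψ t) ≤
      ((1+δ)^2 * Real.exp (-(m / a t'))) * (Real.exp (-σ₀) * ψ t) := by
    have e2 := mul_le_mul_of_nonneg_left C2
      (show (0:ℝ) ≤ (1+δ) * Real.exp (-(m / a t')) by positivity)
    calc ((1-δ) * Real.exp (-(m / a t))) * (Real.exp (-σ₀) * ψ t)
        = (1-δ) * Real.exp (-σ₁) * ψ t := by rw [hsplit]; ring
      _ ≤ ψ (t' + m) := A1
      _ ≤ (1+δ) * Real.exp (-(m / a t')) * ψ t' := B2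
      _ ≤ ((1+δ) * Real.exp (-(m / a t'))) * ((1+δ) * Real.exp (-σ₀) * ψ t) := by
          calc (1+δ) * Real.exp (-(m / a t')) * ψ t'
              = ((1+δ) * Real.exp (-(m / a t'))) * ψ t' := by ring
            _ ≤ _ := e2
      _ = ((1+δ)^2 * Real.exp (-(m / a t'))) * (Real.exp (-σ₀) * ψ t) := by ring
  have chainB : ((1-δ)^2 * Real.exp (-(m / a t'))) * (Real.exp (-σ₀) * ψ t) ≤
      ((1+δ) * Real.exp (-(m / a t))) * (Real.exp (-σ₀) * ψ t) := by
    have e2 := mul_le_mul_of_nonneg_left C1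
      (show (0:ℝ) ≤ (1-δ) * Real.exp (-(m / a t')) by positivity)
    calc ((1-δ)^2 * Real.exp (-(m / a t'))) * (Real.exp (-σ₀) * ψ t)
        = ((1-δ) * Real.exp (-(m / a t'))) * ((1-δ) * Real.exp (-σ₀) * ψ t) := by ring
      _ ≤ ((1-δ) * Real.exp (-(m / a t'))) * ψ t' := e2
      _ = (1-δ) * Real.exp (-(m / a t')) * ψ t' := by ring
      _ ≤ ψ (t' + m) := B1
      _ ≤ (1+δ) * Real.exp (-σ₁) * ψ t := A2
      _ = ((1+δ) * Real.exp (-(m / a t))) * (Real.exp (-σ₀) * ψ t) := by rw [hsplit]; ring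
  have hEψ : (0:ℝ) < Real.exp (-σ₀) * ψ t := by positivity
  have s1 : (1-δ) * Real.exp (-(m / a t)) ≤ (1+δ)^2 * Real.exp (-(m / a t')) :=
    le_of_mul_le_mul_right chainA hEψ
  have s1b : (1-δ)^2 * Real.exp (-(m / a t')) ≤ (1+δ) * Real.exp (-(m / a t)) :=
    le_of_mul_le_mul_right chainB hEψ
  have hη' : 0 < η := hη0
  -- numeric: (1+δ)^2 ≤ (1-δ) * exp η  and  (1+δ) ≤ (1-δ)^2 * exp η
  have hexpη : 1 + η ≤ Real.exp η := by linarith [Real.add_one_le_exp η]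
  have hde1 : (1+δ)^2 ≤ (1-δ) * Real.exp η := by
    have : (1+δ)^2 ≤ (1-δ) * (1+η) := by rw [hδ]; nlinarith
    nlinarith
  have hde2 : (1+δ) ≤ (1-δ)^2 * Real.exp η := by
    have : (1+δ) ≤ (1-δ)^2 * (1+η) := by
      rw [hδ]
      nlinarith [mul_nonneg (mul_nonneg hη0.le hη0.le) hη0.le, sq_nonneg η, hη1, hη0.le]
    nlinarith [sq_nonneg (1-δ)]
  have d2 : m / a t' - m / a t ≤ η := by
    have e1 : Real.exp (-(m / a t)) ≤ Real.exp η * Real.exp (-(m / a t')) := by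
      have h1 : (1-δ) * Real.exp (-(m / a t)) ≤ (1-δ) * (Real.exp η * Real.exp (-(m / a t'))) := by
        calc (1-δ) * Real.exp (-(m / a t)) ≤ (1+δ)^2 * Real.exp (-(m / a t')) := s1
          _ ≤ ((1-δ) * Real.exp η) * Real.exp (-(m / a t')) :=
              mul_le_mul_of_nonneg_right hde1 (Real.exp_pos _).le
          _ = (1-δ) * (Real.exp η * Real.exp (-(m / a t'))) := by ring
      exact le_of_mul_le_mul_left h1 hδ01
    have : Real.exp (m / a t' - m / a t) ≤ Real.exp η := by
      calc Real.exp (m / a t' - m / a t)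
          = Real.exp (-(m / a t)) * Real.exp (m / a t') := by rw [← Real.exp_add]; ring_nf
        _ ≤ (Real.exp η * Real.exp (-(m / a t'))) * Real.exp (m / a t') :=
            mul_le_mul_of_nonneg_right e1 (Real.exp_pos _).le
        _ = Real.exp η * (Real.exp (-(m / a t')) * Real.exp (m / a t')) := by ring
        _ = Real.exp η := by rw [← Real.exp_add]; simp
    exact Real.exp_le_exp.1 this
  have d1 : m / a t - m / a t' ≤ η := by
    have e1 : Real.exp (-(m / a t')) ≤ Real.exp η * Real.exp (-(m / a t)) := by
      have h1 : (1-δ)^2 * Real.exp (-(m / a t')) ≤ (1-δ)^2 * (Real.exp η * Real.exp (-(m / a t))) := by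
        calc (1-δ)^2 * Real.exp (-(m / a t')) ≤ (1+δ) * Real.exp (-(m / a t)) := s1b
          _ ≤ ((1-δ)^2 * Real.exp η) * Real.exp (-(m / a t)) :=
              mul_le_mul_of_nonneg_right hde2 (Real.exp_pos _).le
          _ = (1-δ)^2 * (Real.exp η * Real.exp (-(m / a t))) := by ring
      exact le_of_mul_le_mul_left h1 (by positivity)
    have : Real.exp (m / a t - m / a t') ≤ Real.exp η := by
      calc Real.exp (m / a t - m / a t')
          = Real.exp (-(m / a t')) * Real.exp (m / a t) := by rw [← Real.exp_add]; ring_nf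
        _ ≤ (Real.exp η * Real.exp (-(m / a t))) * Real.exp (m / a t) :=
            mul_le_mul_of_nonneg_right e1 (Real.exp_pos _).le
        _ = Real.exp η * (Real.exp (-(m / a t)) * Real.exp (m / a t)) := by ring
        _ = Real.exp η := by rw [← Real.exp_add]; simp
    exact Real.exp_le_exp.1 this
  have hη1' : 0 < 1 - η := by linarith
  rcases le_total (a t') (a t) with hc | hc
  · -- m = a t'
    have hm' : m = a t' := by rw [hm]; exact min_eq_left hc
    rw [hm'] at d2
    rw [div_self (ne_of_gt hat')] at d2
    -- 1 - a t'/a t ≤ η  ⟹  (1-η) a t ≤ a t'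
    have h4 : a t' / a t * a t = a t' := div_mul_cancel₀ _ (ne_of_gt hat)
    constructor
    · have h5 := mul_le_mul_of_nonneg_right (show 1 - η ≤ a t' / a t by linarith) hat.le
      rw [h4] at h5; linarith
    · rw [le_div_iff₀ hη1']
      nlinarith
  · -- m = a t
    have hm' : m = a t := by rw [hm]; exact min_eq_right hc
    rw [hm'] at d1
    rw [div_self (ne_of_gt hat)] at d1
    have h4 : a t / a t' * a t' = a t := div_mul_cancel₀ _ (ne_of_gt hat')
    constructor
    · nlinarith
    · rw [le_div_iff₀ hη1']
      have h5 := mul_le_mul_of_nonneg_right (show 1 - η ≤ a t / a t' by linarith) hat'.le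
      rw [h4] at h5; linarith

set_option maxHeartbeats 2000000 in
/-- The auxiliary function is o(v). -/
lemma gumbel_aux_small (hmono : ∀ ⦃x y : ℝ⦄, x ≤ y → ψ y ≤ ψ x) (hpos : ∀ t, 0 < ψ t)
    (hapos : ∀ u > 0, 0 < a u)
    (hGum : ∀ t : ℝ, 0 ≤ t → Tendsto (fun u => ψ (u + a u * t) / ψ u) atTop (𝓝 (Real.exp (-t))))
    (ρ : ℝ) (hρ : 0 < ρ) : ∀ᶠ v in atTop, a v ≤ ρ * v := by
  classical
  set η : ℝ := min (ρ/8) (1/4) with hη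
  have hη0 : 0 < η := lt_min (by positivity) (by norm_num)
  have hη4 : η ≤ 1/4 := min_le_right _ _
  have hηρ : η ≤ ρ/8 := min_le_left _ _
  have hη1 : 0 < 1 - η := by linarith
  obtain ⟨T₁, hT₁0, hsn⟩ := gumbel_sn ψ a hmono hpos hapos hGum η hη0 (by linarith)
  obtain ⟨T₂, hT₂0, hdini⟩ := gumbel_dini ψ a hmono hpos hapos hGum (1/2) 1
    (by norm_num) (by norm_num) le_rfl
  set T : ℝ := max T₁ T₂ with hT
  have hTpos : 0 < T := lt_of_lt_of_le hT₁0 (le_max_left _ _)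
  clear_value η T
  -- the walk from T
  set u : ℕ → ℝ := fun j => Nat.rec T (fun _ x => x + a x) j with hu
  have hu0 : u 0 = T := rfl
  have huS : ∀ j, u (j+1) = u j + a (u j) := fun j => rfl
  have huT : ∀ j, T ≤ u j := by
    intro j; induction j with
    | zero => exact le_of_eq hu0.symm
    | succ k ih =>
      have hpos' : 0 < a (u k) := hapos _ (lt_of_lt_of_le hTpos ih)
      rw [huS]; linarith
  have hua : ∀ j, 0 < a (u j) := fun j => hapos _ (lt_of_lt_of_le hTpos (huT j))
  have hsn' : ∀ j, ∀ σ₀, 0 ≤ σ₀ → σ₀ ≤ 1 →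
      (1-η) * a (u j) ≤ a (u j + a (u j) * σ₀) ∧ a (u j + a (u j) * σ₀) ≤ a (u j) / (1-η) :=
    fun j => (hsn (u j) (le_trans (by rw [hT]; exact le_max_left _ _) (huT j))).2.2
  have hstep : ∀ j, a (u (j+1)) ≤ a (u j) / (1-η) := by
    intro j
    have := (hsn' j 1 zero_le_one le_rfl).2
    rw [mul_one] at this
    rw [huS]; exact this
  set q : ℝ := (3/2) * Real.exp (-1) with hq
  have hq0 : 0 < q := by positivity
  have hq1 : q < 1 := by
    have h1 : Real.exp (-1) * Real.exp 1 = 1 := by rw [← Real.exp_add]; norm_num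
    nlinarith [Real.exp_one_gt_d9, Real.exp_pos (-1:ℝ)]
  have hψstep : ∀ j, ψ (u (j+1)) ≤ q * ψ (u j) := by
    intro j
    have := ((hdini (u j) (le_trans (by rw [hT]; exact le_max_right _ _) (huT j))).2 1 zero_le_one le_rfl).2
    rw [mul_one] at this
    rw [huS, hq]
    calc ψ (u j + a (u j)) ≤ (1 + 1/2) * Real.exp (-1) * ψ (u j) := this
      _ = 3/2 * Real.exp (-1) * ψ (u j) := by ring
  have hψj : ∀ j, ψ (u j) ≤ q^j * ψ T := by
    intro j; induction j with
    | zero => rw [hu0]; simp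
    | succ k ih =>
      calc ψ (u (k+1)) ≤ q * ψ (u k) := hψstep k
        _ ≤ q * (q^k * ψ T) := by nlinarith
        _ = q^(k+1) * ψ T := by ring
  have haj : ∀ j, a (u j) ≤ a T / (1-η)^j := by
    intro j; induction j with
    | zero => rw [hu0]; simp
    | succ k ih =>
      have hp : (0:ℝ) < (1-η)^k := by positivity
      calc a (u (k+1)) ≤ a (u k) / (1-η) := hstep k
        _ ≤ (a T / (1-η)^k) / (1-η) := by gcongr
        _ = a T / (1-η)^(k+1) := by rw [div_div, ← pow_succ]
  have hdist : ∀ k, a (u k) * ((1-η) * (1 - (1-η)^k)) ≤ η * (u k - T) := by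
    intro k; induction k with
    | zero => rw [hu0]; simp
    | succ k ih =>
      have hb : (1-η) * a (u (k+1)) ≤ a (u k) := by
        have h2 := mul_le_mul_of_nonneg_left (hstep k) hη1.le
        calc (1-η) * a (u (k+1)) ≤ (1-η) * (a (u k) / (1-η)) := h2
          _ = a (u k) := by field_simp
      have hpk : (1-η)^k ≤ 1 := pow_le_one₀ (by linarith) (by linarith)
      have hfac : (0:ℝ) ≤ (1-η) * (1 - (1-η)^k) + η := by nlinarith
      calc a (u (k+1)) * ((1-η) * (1 - (1-η)^(k+1)))
          = ((1-η) * a (u (k+1))) * ((1-η) * (1 - (1-η)^k) + η) := by rw [pow_succ]; ring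
        _ ≤ a (u k) * ((1-η) * (1 - (1-η)^k) + η) := mul_le_mul_of_nonneg_right hb hfac
        _ = a (u k) * ((1-η) * (1 - (1-η)^k)) + η * a (u k) := by ring
        _ ≤ η * (u k - T) + η * a (u k) := by linarith
        _ = η * (u (k+1) - T) := by rw [huS]; ring
  -- constant for small-step-count case
  set J : ℕ := ⌈(1:ℝ)/η⌉₊ with hJ
  have hJη : 1 ≤ η * J := by
    have h1 : (1:ℝ)/η ≤ (J:ℝ) := Nat.le_ceil _
    rw [div_le_iff₀ hη0] at h1
    linarith [h1]
  have hpowJ : (1-η)^J ≤ 1/2 := by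
    have h1 : (1-η : ℝ) ≤ Real.exp (-η) := by
      have := Real.add_one_le_exp (-η); linarith
    have h2 : (1-η:ℝ)^J ≤ Real.exp (-η)^J := pow_le_pow_left₀ (by linarith) h1 J
    have h3 : Real.exp (-η)^J = Real.exp ((J:ℝ) * (-η)) := (Real.exp_nat_mul _ _).symm
    have h4 : Real.exp ((J:ℝ) * (-η)) ≤ Real.exp (-1) := by
      apply Real.exp_le_exp.2; nlinarith
    have h5 : Real.exp (-1) ≤ 1/2 := by
      have h6 : Real.exp (-1) * Real.exp 1 = 1 := by rw [← Real.exp_add]; norm_num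
      nlinarith [Real.exp_one_gt_d9, Real.exp_pos (-1:ℝ)]
    calc (1-η:ℝ)^J ≤ Real.exp (-η)^J := h2
      _ = Real.exp ((J:ℝ) * (-η)) := h3
      _ ≤ Real.exp (-1) := h4
      _ ≤ 1/2 := h5
  set C₀ : ℝ := a T / (1-η)^(J+1) with hC₀
  have hC₀0 : 0 < C₀ := div_pos (hapos T hTpos) (by positivity)
  have key : ∀ v, T ≤ v → a v ≤ C₀ + (ρ/2) * v := by
    intro v hTv
    have hv0 : 0 < v := lt_of_lt_of_le hTpos hTv
    -- the walk escapes past v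
    have hescape : ∃ j, v < u (j+1) := by
      by_contra hno
      push_neg at hno
      obtain ⟨jn, hjn⟩ := exists_pow_lt_of_lt_one (div_pos (hpos v) (hpos T)) hq1
      have e1 : ψ v ≤ ψ (u (jn+1)) := hmono (hno jn)
      have e2 : ψ (u (jn+1)) ≤ q^(jn+1) * ψ T := hψj (jn+1)
      have e3 : q^(jn+1) ≤ q^jn := pow_le_pow_of_le_one hq0.le hq1.le (by omega)
      rw [lt_div_iff₀ (hpos T)] at hjn
      nlinarith [hpos T, hpos v]
    obtain ⟨k, hk2, hkmin⟩ : ∃ k, v < u (k+1) ∧ ∀ j < k, ¬ v < u (j+1) :=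
      ⟨Nat.find hescape, Nat.find_spec hescape, fun j hj => Nat.find_min hescape hj⟩
    have hk1 : u k ≤ v := by
      cases k with
      | zero => rw [hu0]; exact hTv
      | succ k' =>
        by_contra hlt
        push_neg at hlt
        exact hkmin k' (Nat.lt_succ_self k') hlt
    have hak : 0 < a (u k) := hua k
    set σ₀ : ℝ := (v - u k) / a (u k) with hσ₀
    have hσ₀0 : 0 ≤ σ₀ := div_nonneg (by linarith) hak.le
    have hσ₀1 : σ₀ ≤ 1 := by
      rw [hσ₀, div_le_one hak]
      have := hk2; rw [huS] at this; linarith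
    have hveq : u k + a (u k) * σ₀ = v := by rw [hσ₀]; field_simp; ring
    have hav : a v ≤ a (u k) / (1-η) := by
      rw [← hveq]; exact (hsn' k σ₀ hσ₀0 hσ₀1).2
    rcases le_or_gt k J with hkJ | hkJ
    · -- few steps
      have h1 : a (u k) ≤ a T / (1-η)^k := haj k
      have h2 : a v ≤ (a T / (1-η)^k) / (1-η) := le_trans hav (by gcongr)
      have h3 : (a T / (1-η)^k) / (1-η) = a T / (1-η)^(k+1) := by rw [div_div, ← pow_succ]
      have h4 : a T / (1-η)^(k+1) ≤ C₀ := by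
        rw [hC₀]
        exact div_le_div_of_nonneg_left (hapos T hTpos).le (by positivity)
          (pow_le_pow_of_le_one (by linarith) (by linarith) (by omega))
      nlinarith [mul_pos (show (0:ℝ) < ρ/2 by positivity) hv0]
    · -- many steps: distance bound
      have h1 : a (u k) * ((1-η) * (1 - (1-η)^k)) ≤ η * (u k - T) := hdist k
      have hpk : (1-η)^k ≤ (1-η)^J :=
        pow_le_pow_of_le_one (by linarith) (by linarith) (by omega)
      have h2 : (1-η) * (1 - (1-η)^k) ≥ 3/8 := by nlinarith
      have h3 : a (u k) * (3/8) ≤ η * (u k - T) := by nlinarith [hak]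
      have h4 : η * (u k - T) ≤ η * v := by
        apply mul_le_mul_of_nonneg_left _ hη0.le
        linarith
      have h5 : a (u k) ≤ (8/3) * η * v := by nlinarith
      have h6 : a v ≤ ((8/3) * η * v) / (1-η) := le_trans hav (by gcongr)
      have h7 : ((8/3) * η * v) / (1-η) ≤ (8/3) * η * v * (4/3) := by
        rw [div_le_iff₀ hη1]
        nlinarith [mul_nonneg (mul_nonneg (show (0:ℝ) ≤ 8/3 by norm_num) hη0.le) hv0.le]
      have h8 : (8/3 : ℝ) * η * (4/3) ≤ ρ/2 := by nlinarith
      nlinarith [hC₀0, hv0]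
  filter_upwards [eventually_ge_atTop T, eventually_ge_atTop (2*C₀/ρ)] with v h1 h2
  have h3 := key v h1
  have h4 : C₀ ≤ (ρ/2) * v := by
    rw [div_le_iff₀ hρ] at h2
    nlinarith
  nlinarith

set_option maxHeartbeats 1000000 in
/-- Rapid variation of the tail. -/
lemma tail_rapid_variation (hmono : ∀ ⦃x y : ℝ⦄, x ≤ y → ψ y ≤ ψ x) (hpos : ∀ t, 0 < ψ t)
    (hapos : ∀ u > 0, 0 < a u)
    (hGum : ∀ t : ℝ, 0 ≤ t → Tendsto (fun u => ψ (u + a u * t) / ψ u) atTop (𝓝 (Real.exp (-t))))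
    (lam : ℝ) (hlam : 1 < lam) :
    Tendsto (fun t => ψ (lam * t) / ψ t) atTop (𝓝 0) := by
  rw [NormedAddCommGroup.tendsto_nhds_zero]
  intro ε hε
  set s : ℝ := max 1 (Real.log (4/ε)) with hs
  have hs1 : (1:ℝ) ≤ s := le_max_left _ _
  have hexp : Real.exp (-s) ≤ ε/4 := by
    have h8 : (0:ℝ) < 4/ε := by positivity
    have h1 : 4/ε ≤ Real.exp s := by
      calc 4/ε = Real.exp (Real.log (4/ε)) := (Real.exp_log h8).symm
        _ ≤ Real.exp s := Real.exp_le_exp.2 (le_max_right _ _)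
    have h2 : 4 ≤ ε * Real.exp s := by rw [div_le_iff₀ hε] at h1; linarith
    have h3 : Real.exp (-s) * Real.exp s = 1 := by rw [← Real.exp_add]; simp
    nlinarith [Real.exp_pos s, Real.exp_pos (-s)]
  have E1 := (hGum s (by linarith)).eventually_lt_const
    (show Real.exp (-s) < 2 * Real.exp (-s) by nlinarith [Real.exp_pos (-s)])
  have E2 := gumbel_aux_small ψ a hmono hpos hapos hGum ((lam - 1)/s)
    (div_pos (by linarith) (by linarith))
  filter_upwards [E1, E2, eventually_gt_atTop (0:ℝ)] with t H1 H2 ht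
  have hψt := hpos t
  have hle : t + a t * s ≤ lam * t := by
    have h1 : a t * s ≤ ((lam-1)/s) * t * s := by
      apply mul_le_mul_of_nonneg_right H2 (by linarith)
    have h2 : ((lam-1)/s) * t * s = (lam - 1) * t := by field_simp
    nlinarith
  have h3 : ψ (lam * t) ≤ ψ (t + a t * s) := hmono hle
  rw [div_lt_iff₀ hψt] at H1
  have h4 : 0 ≤ ψ (lam * t) / ψ t := div_nonneg (hpos _).le hψt.le
  rw [Real.norm_eq_abs, abs_of_nonneg h4, div_lt_iff₀ hψt]
  nlinarith [Real.exp_pos (-s)]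

end Analysis

set_option maxHeartbeats 1000000 in
theorem truncation_step_gumbel_contraction
    {Ω : Type*} [MeasureSpace Ω] [IsProbabilityMeasure (ℙ : Measure Ω)]
    (S Y : Ω → ℝ) (hS : Measurable S) (hY : Measurable Y)
    (hindep : IndepFun S Y)
    (hSpos : ∀ᵐ ω ∂ℙ, 0 < S ω) (hSle : ∀ᵐ ω ∂ℙ, S ω ≤ 1)
    (hSend : ∀ w : ℝ, w < 1 → 0 < ℙ {ω | S ω > w})
    (hYpos : ∀ᵐ ω ∂ℙ, 0 < Y ω)
    (hYend : ∀ u : ℝ, 0 < ℙ {ω | Y ω > u})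
    (a : ℝ → ℝ) (hapos : ∀ u > 0, 0 < a u)
    (τ : ℝ) (hτ : -1 ≤ τ) (haRV : RegularlyVarying a (-τ))
    (hGum : ∀ t : ℝ, 0 ≤ t →
      Tendsto (fun u => (ℙ {ω | Y ω > u + a u * t}).toReal / (ℙ {ω | Y ω > u}).toReal)
        atTop (𝓝 (Real.exp (-t)))) :
    ∀ z : ℝ, 0 ≤ z → ∀ w : ℝ, 0 < w → w < 1 →
      Tendsto (fun u => (ℙ {ω | S ω * Y ω > u + a u * z}).toReal /
          ∫ s in Set.Ioc w 1, (ℙ {ω | Y ω > (u + a u * z) / s}).toReal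
            ∂(Measure.map S ℙ)) atTop (𝓝 1) := by
  intro z hz w hw0 hw1
  -- basic setup
  set μS : Measure ℝ := Measure.map S ℙ with hμS
  set μY : Measure ℝ := Measure.map Y ℙ with hμY
  haveI hμSprob : IsProbabilityMeasure μS := Measure.isProbabilityMeasure_map hS.aemeasurable
  haveI hμYprob : IsProbabilityMeasure μY := Measure.isProbabilityMeasure_map hY.aemeasurable
  set ψ : ℝ → ℝ := fun t => (ℙ {ω | Y ω > t}).toReal with hψ
  have hYx : ∀ x : ℝ, ℙ {ω | Y ω > x} = μY (Set.Ioi x) := by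
    intro x
    rw [hμY, Measure.map_apply hY measurableSet_Ioi]
    rfl
  have hfin : ∀ x : ℝ, ℙ {ω | Y ω > x} ≠ ⊤ := fun x => measure_ne_top _ _
  have hψpos : ∀ t, 0 < ψ t := fun t => ENNReal.toReal_pos (hYend t).ne' (hfin t)
  have hψmono : ∀ ⦃x y : ℝ⦄, x ≤ y → ψ y ≤ ψ x := by
    intro x y hxy
    apply ENNReal.toReal_mono (hfin x)
    apply measure_mono
    intro ω hω
    exact lt_of_le_of_lt hxy hω
  -- w' and lambda
  set w' : ℝ := (w + 1)/2 with hw'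
  have hww' : w < w' := by rw [hw']; linarith
  have hw'1 : w' < 1 := by rw [hw']; linarith
  have hw'0 : 0 < w' := by rw [hw']; linarith
  set lam : ℝ := w'/w with hlam'
  have hlam : 1 < lam := (one_lt_div hw0).2 hww'
  have hRV := tail_rapid_variation ψ a hψmono hψpos hapos hGum lam hlam
  -- v(u) → ∞
  set v : ℝ → ℝ := fun u => u + a u * z with hv
  have hvtend : Tendsto v atTop atTop := by
    apply tendsto_atTop_mono' _ _ tendsto_id
    filter_upwards [eventually_gt_atTop (0:ℝ)] with u hu
    have := hapos u hu
    show u ≤ u + a u * z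
    nlinarith
  -- measurability of the tail kernel
  have hg_meas : Measurable (fun x : ℝ => μY (Set.Ioi x)) := by
    have hanti : Antitone (fun x : ℝ => μY (Set.Ioi x)) :=
      fun x y hxy => measure_mono (Set.Ioi_subset_Ioi hxy)
    exact hanti.measurable
  have hker : ∀ r : ℝ, Measurable (fun x : ℝ => μY (Set.Ioi (r / x))) :=
    fun r => hg_meas.comp (measurable_const.div measurable_id)
  -- μS is supported on (0,1]
  have hμS_ae : ∀ᵐ x ∂μS, x ∈ Set.Ioc (0:ℝ) 1 := by
    have h0 : ∀ᵐ ω ∂ℙ, S ω ∈ Set.Ioc (0:ℝ) 1 := by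
      filter_upwards [hSpos, hSle] with ω h1 h2
      exact ⟨h1, h2⟩
    rw [hμS]
    exact (ae_map_iff hS.aemeasurable measurableSet_Ioc).2 h0
  have hrestr : μS.restrict (Set.Ioc (0:ℝ) 1) = μS :=
    Measure.restrict_eq_self_of_ae_mem hμS_ae
  -- disintegration identity
  have hkey : ∀ r : ℝ, ℙ {ω | S ω * Y ω > r} =
      ∫⁻ x in Set.Ioc (0:ℝ) 1, μY (Set.Ioi (r / x)) ∂μS := by
    intro r
    have hprod : Measure.map (fun ω => (S ω, Y ω)) ℙ = μS.prod μY :=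
      (indepFun_iff_map_prod_eq_prod_map_map hS.aemeasurable hY.aemeasurable).1 hindep
    have hprodm : Measurable fun ω => (S ω, Y ω) := hS.prodMk hY
    have hset : MeasurableSet {p : ℝ × ℝ | p.1 * p.2 > r} :=
      measurableSet_lt measurable_const (measurable_fst.mul measurable_snd)
    have h1 : ℙ {ω | S ω * Y ω > r} =
        (Measure.map (fun ω => (S ω, Y ω)) ℙ) {p : ℝ × ℝ | p.1 * p.2 > r} := by
      rw [Measure.map_apply hprodm hset]
      rfl
    rw [h1, hprod]
    calc (μS.prod μY) {p : ℝ × ℝ | p.1 * p.2 > r}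
        = ∫⁻ x, μY (Prod.mk x ⁻¹' {p : ℝ × ℝ | p.1 * p.2 > r}) ∂μS :=
          Measure.prod_apply hset
      _ = ∫⁻ x in Set.Ioc (0:ℝ) 1, μY (Prod.mk x ⁻¹' {p : ℝ × ℝ | p.1 * p.2 > r}) ∂μS := by
          rw [hrestr]
      _ = ∫⁻ x in Set.Ioc (0:ℝ) 1, μY (Set.Ioi (r / x)) ∂μS := by
          apply setLIntegral_congr_fun measurableSet_Ioc
          intro x hx
          show μY (Prod.mk x ⁻¹' _) = μY (Set.Ioi (r / x))
          congr 1
          ext y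
          simp only [Set.mem_preimage, Set.mem_setOf_eq, Set.mem_Ioi]
          rw [gt_iff_lt, div_lt_iff₀ hx.1, mul_comm]
  -- split the integral at w
  have hsplit : ∀ r : ℝ, ∫⁻ x in Set.Ioc (0:ℝ) 1, μY (Set.Ioi (r / x)) ∂μS =
      (∫⁻ x in Set.Ioc (0:ℝ) w, μY (Set.Ioi (r / x)) ∂μS) +
        ∫⁻ x in Set.Ioc w 1, μY (Set.Ioi (r / x)) ∂μS := by
    intro r
    rw [← lintegral_union measurableSet_Ioc (Set.Ioc_disjoint_Ioc_of_le le_rfl),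
      Set.Ioc_union_Ioc_eq_Ioc hw0.le hw1.le]
  -- notation for the two pieces
  set Rl : ℝ → ENNReal := fun r => ∫⁻ x in Set.Ioc (0:ℝ) w, μY (Set.Ioi (r / x)) ∂μS with hRl
  set Dl : ℝ → ENNReal := fun r => ∫⁻ x in Set.Ioc w 1, μY (Set.Ioi (r / x)) ∂μS with hDl
  have hDlfin : ∀ r, Dl r ≤ 1 := by
    intro r
    calc Dl r ≤ ∫⁻ _ in Set.Ioc w 1, 1 ∂μS := by
          apply lintegral_mono
          intro x
          exact prob_le_one
      _ = μS (Set.Ioc w 1) := by rw [setLIntegral_one]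
      _ ≤ 1 := prob_le_one
  have hRlfin : ∀ r, Rl r ≤ 1 := by
    intro r
    calc Rl r ≤ ∫⁻ _ in Set.Ioc (0:ℝ) w, 1 ∂μS := by
          apply lintegral_mono
          intro x
          exact prob_le_one
      _ = μS (Set.Ioc (0:ℝ) w) := by rw [setLIntegral_one]
      _ ≤ 1 := prob_le_one
  have hDlnetop : ∀ r, Dl r ≠ ⊤ := fun r => (lt_of_le_of_lt (hDlfin r) ENNReal.one_lt_top).ne
  have hRlnetop : ∀ r, Rl r ≠ ⊤ := fun r => (lt_of_le_of_lt (hRlfin r) ENNReal.one_lt_top).ne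
  -- denominator identity
  have hD : ∀ r : ℝ, ∫ x in Set.Ioc w 1, (ℙ {ω | Y ω > r / x}).toReal ∂μS = (Dl r).toReal := by
    intro r
    have h1 : ∀ x : ℝ, (ℙ {ω | Y ω > r / x}).toReal = (μY (Set.Ioi (r / x))).toReal := by
      intro x; rw [hYx]
    rw [show (fun x => (ℙ {ω | Y ω > r / x}).toReal) = fun x => (μY (Set.Ioi (r / x))).toReal from
      funext h1]
    rw [hDl]
    exact integral_toReal ((hker r).aemeasurable) (ae_of_all _ (fun x => measure_lt_top _ _))
  -- bounds
  have hRle : ∀ r : ℝ, 0 ≤ r → (Rl r).toReal ≤ ψ (r / w) := by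
    intro r hr
    have h1 : Rl r ≤ μY (Set.Ioi (r / w)) := by
      calc Rl r ≤ ∫⁻ _ in Set.Ioc (0:ℝ) w, μY (Set.Ioi (r / w)) ∂μS := by
            apply setLIntegral_mono measurable_const
            intro x hx
            apply measure_mono
            apply Set.Ioi_subset_Ioi
            exact div_le_div_of_nonneg_left hr hx.1 hx.2
        _ = μY (Set.Ioi (r / w)) * μS (Set.Ioc (0:ℝ) w) := by
            rw [setLIntegral_const]
        _ ≤ μY (Set.Ioi (r / w)) * 1 := by
            apply mul_le_mul_right prob_le_one
        _ = μY (Set.Ioi (r / w)) := mul_one _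
    have h2 := ENNReal.toReal_mono (measure_ne_top _ _) h1
    simp only [hψ]
    rw [hYx]
    exact h2
  have hSmass : ℙ {ω | S ω > w'} ≤ μS (Set.Ioc w' 1) := by
    have h0 : μS (Set.Ioc w' 1) = ℙ (S ⁻¹' Set.Ioc w' 1) := by
      rw [hμS, Measure.map_apply hS measurableSet_Ioc]
    have h1 : {ω | S ω > w'} ⊆ (S ⁻¹' Set.Ioc w' 1) ∪ {ω | ¬ S ω ≤ 1} := by
      intro ω hω
      by_cases hc : S ω ≤ 1
      · exact Or.inl ⟨hω, hc⟩
      · exact Or.inr hc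
    have h2 : ℙ {ω | ¬ S ω ≤ 1} = 0 := by
      rw [← ae_iff]
      filter_upwards [hSle] with ω h
      exact h
    calc ℙ {ω | S ω > w'} ≤ ℙ ((S ⁻¹' Set.Ioc w' 1) ∪ {ω | ¬ S ω ≤ 1}) := measure_mono h1
      _ ≤ ℙ (S ⁻¹' Set.Ioc w' 1) + ℙ {ω | ¬ S ω ≤ 1} := measure_union_le _ _
      _ = μS (Set.Ioc w' 1) := by rw [h2, h0, add_zero]
  set pt : ℝ := (ℙ {ω | S ω > w'}).toReal with hpt
  have hpt0 : 0 < pt :=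
    ENNReal.toReal_pos (hSend w' hw'1).ne' (measure_ne_top _ _)
  have hDge : ∀ r : ℝ, 0 ≤ r → ψ (r / w') * pt ≤ (Dl r).toReal := by
    intro r hr
    have h1 : μY (Set.Ioi (r / w')) * ℙ {ω | S ω > w'} ≤ Dl r := by
      calc μY (Set.Ioi (r / w')) * ℙ {ω | S ω > w'}
          ≤ μY (Set.Ioi (r / w')) * μS (Set.Ioc w' 1) := mul_le_mul_right hSmass _
        _ = ∫⁻ _ in Set.Ioc w' 1, μY (Set.Ioi (r / w')) ∂μS := (setLIntegral_const _ _).symm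
        _ ≤ ∫⁻ x in Set.Ioc w' 1, μY (Set.Ioi (r / x)) ∂μS := by
            apply setLIntegral_mono (hker r)
            intro x hx
            apply measure_mono
            apply Set.Ioi_subset_Ioi
            exact div_le_div_of_nonneg_left hr hw'0 hx.1.le
        _ ≤ Dl r := lintegral_mono_set (Set.Ioc_subset_Ioc_left hww'.le)
    have h2 := ENNReal.toReal_mono (hDlnetop r) h1
    rw [ENNReal.toReal_mul] at h2
    simp only [hψ]
    rw [hYx]
    rw [hpt]
    exact h2
  -- positivity of denominator
  have hDpos : ∀ r : ℝ, 0 ≤ r → 0 < (Dl r).toReal := by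
    intro r hr
    exact lt_of_lt_of_le (mul_pos (hψpos _) hpt0) (hDge r hr)
  -- the ratio tends to 0
  have hlamid : ∀ r : ℝ, lam * (r / w') = r / w := by
    intro r
    rw [hlam']
    field_simp
  have hxtend : Tendsto (fun u => v u / w') atTop atTop :=
    hvtend.atTop_div_const hw'0
  have htend0 : Tendsto (fun u => ψ (lam * (v u / w')) / ψ (v u / w')) atTop (𝓝 0) :=
    hRV.comp hxtend
  have hratio : Tendsto (fun u => (Rl (v u)).toReal / (Dl (v u)).toReal) atTop (𝓝 0) := by
    apply squeeze_zero' (g := fun u => (ψ (lam * (v u / w')) / ψ (v u / w')) * (1 / pt))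
    · filter_upwards with u
      exact div_nonneg ENNReal.toReal_nonneg ENNReal.toReal_nonneg
    · filter_upwards [hvtend.eventually_ge_atTop 0] with u hu
      have h1 : (Rl (v u)).toReal ≤ ψ (v u / w) := hRle (v u) hu
      have h2 : ψ (v u / w') * pt ≤ (Dl (v u)).toReal := hDge (v u) hu
      have hden : 0 < ψ (v u / w') * pt := mul_pos (hψpos _) hpt0
      have h3 : (Rl (v u)).toReal / (Dl (v u)).toReal ≤ ψ (v u / w) / (ψ (v u / w') * pt) :=
        div_le_div₀ (hψpos _).le h1 hden h2
      have h4 : ψ (v u / w) / (ψ (v u / w') * pt) =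
          ψ (lam * (v u / w')) / ψ (v u / w') * (1 / pt) := by
        rw [hlamid]
        have hb := (hψpos (v u / w')).ne'
        have hc := hpt0.ne'
        field_simp
      exact h3.trans (le_of_eq h4)
    · have h5 := htend0.mul_const (1 / pt)
      simpa using h5
  -- final assembly
  have hone : Tendsto (fun u => 1 + (Rl (v u)).toReal / (Dl (v u)).toReal) atTop (𝓝 1) := by
    have h6 := hratio.const_add (1:ℝ)
    simpa using h6
  apply Tendsto.congr' _ hone
  filter_upwards [hvtend.eventually_ge_atTop 0] with u hu
  have hDr : (Dl (v u)).toReal ≠ 0 := (hDpos (v u) hu).ne'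
  have hNsplit : (ℙ {ω | S ω * Y ω > v u}).toReal = (Rl (v u)).toReal + (Dl (v u)).toReal := by
    rw [hkey (v u), hsplit (v u)]
    exact ENNReal.toReal_add (hRlnetop _) (hDlnetop _)
  have e1 : (u + a u * z) = v u := rfl
  have hgoal : (ℙ {ω | S ω * Y ω > u + a u * z}).toReal /
      ∫ x in Set.Ioc w 1, (ℙ {ω | Y ω > (u + a u * z) / x}).toReal ∂μS
      = 1 + (Rl (v u)).toReal / (Dl (v u)).toReal := by
    rw [e1, hD (v u), hNsplit, add_div, div_self hDr, add_comm]
  exact hgoal.symm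
end
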